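/- arXiv:1808.06789 — 4 statements merged into one kernel-verified Lean document; each statement's English description precedes it below -/
import Mathlib

section
/- Let a₁ < d, b₁ ∈ (0, a₁], a₁ + b₁ > d, and a₂, b₂ ≥ 0 (with a₂ ≥ b₂ if a₁ = b₁). There is a constant C = C(d,a₁,a₂,b₁,b₂) < ∞, independent of L ≥ 1, such that for all x ∈ ℤ^d, ∑_{y ∈ ℤ^d} [⟨x−y⟩_L^{−a₁}/(log⟨(x−y)/L⟩₁)^{a₂}] · [⟨y⟩_L^{−b₁}/(log⟨y/L⟩₁)^{b₂}] ≤ C · ⟨x⟩_L^{d−a₁−b₁}/(log⟨x/L⟩₁)^{b₂}. -/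
open Real

/-- Euclidean norm on `ℤ^d`. -/
noncomputable def znorm {d : ℕ} (x : Fin d → ℤ) : ℝ :=
  Real.sqrt (∑ i, ((x i : ℝ)) ^ 2)

/-- `⟨x⟩_L = (π/2) · max(|x|, L)`. -/
noncomputable def veeZ {d : ℕ} (x : Fin d → ℤ) (L : ℝ) : ℝ :=
  (Real.pi / 2) * max (znorm x) L

/-- `log⟨x/L⟩₁ = log((π/2) · max(|x|/L, 1))`. -/
noncomputable def logveeZ {d : ℕ} (x : Fin d → ℤ) (L : ℝ) : ℝ :=
  Real.log ((Real.pi / 2) * max (znorm x / L) 1)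

namespace ConvAux

variable {d : ℕ}

lemma znorm_nonneg (x : Fin d → ℤ) : 0 ≤ znorm x := Real.sqrt_nonneg _

lemma coord_abs_le (x : Fin d → ℤ) (i : Fin d) : |(x i : ℝ)| ≤ znorm x := by
  rw [← Real.sqrt_sq_eq_abs]
  exact Real.sqrt_le_sqrt (Finset.single_le_sum
    (f := fun j => ((x j : ℝ)) ^ 2) (fun j _ => sq_nonneg _) (Finset.mem_univ i))

lemma znorm_eq_norm (z : Fin d → ℤ) :
    znorm z = ‖(WithLp.equiv 2 (Fin d → ℝ)).symm (fun i => (z i : ℝ))‖ := by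
  rw [EuclideanSpace.norm_eq]
  simp [znorm, sq_abs]

lemma znorm_triangle (x y : Fin d → ℤ) : znorm x ≤ znorm (x - y) + znorm y := by
  rw [znorm_eq_norm, znorm_eq_norm, znorm_eq_norm]
  have h : (WithLp.equiv 2 (Fin d → ℝ)).symm (fun i => (((x - y) i : ℤ) : ℝ))
      = (WithLp.equiv 2 (Fin d → ℝ)).symm (fun i => ((x i : ℤ) : ℝ))
        - (WithLp.equiv 2 (Fin d → ℝ)).symm (fun i => ((y i : ℤ) : ℝ)) := by
    rw [← (WithLp.equiv 2 (Fin d → ℝ)).symm.injective.eq_iff.mpr rfl]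
    rw [show ∀ u v : Fin d → ℝ, (WithLp.equiv 2 (Fin d → ℝ)).symm u - (WithLp.equiv 2 (Fin d → ℝ)).symm v = (WithLp.equiv 2 (Fin d → ℝ)).symm (u - v) from fun u v => rfl]
    congr 1
    funext i
    simp [Pi.sub_apply]
  rw [h]
  calc ‖(WithLp.equiv 2 (Fin d → ℝ)).symm (fun i => ((x i : ℤ) : ℝ))‖
      = ‖((WithLp.equiv 2 (Fin d → ℝ)).symm (fun i => ((x i : ℤ) : ℝ))
          - (WithLp.equiv 2 (Fin d → ℝ)).symm (fun i => ((y i : ℤ) : ℝ)))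
          + (WithLp.equiv 2 (Fin d → ℝ)).symm (fun i => ((y i : ℤ) : ℝ))‖ := by
        rw [sub_add_cancel]
    _ ≤ _ := norm_add_le _ _

lemma max_sub_le (x y : Fin d → ℤ) (L : ℝ) :
    max (znorm x) L ≤ max (znorm y) L + znorm (x - y) := by
  rcases max_cases (znorm x) L with ⟨h1, _⟩ | ⟨h1, _⟩
  · rw [h1]
    have h2 := znorm_triangle x y
    have h3 : znorm y ≤ max (znorm y) L := le_max_left _ _
    linarith
  · rw [h1]
    have := znorm_nonneg (x - y)
    have := le_max_right (znorm y) L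
    linarith

lemma card_le (s : Finset (Fin d → ℤ)) (r : ℝ) (hr : 1 ≤ r)
    (hs : ∀ z ∈ s, znorm z ≤ r) : (s.card : ℝ) ≤ (5 * r) ^ d := by
  classical
  set N : ℤ := (⌈r⌉₊ : ℤ) with hN
  have hsub : s ⊆ Fintype.piFinset fun _ : Fin d => Finset.Icc (-N) N := by
    intro z hz
    rw [Fintype.mem_piFinset]
    intro i
    have h1 : |(z i : ℝ)| ≤ r := (coord_abs_le z i).trans (hs z hz)
    have h2 : (r : ℝ) ≤ (N : ℝ) := by simp [hN]; exact Nat.le_ceil r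
    rw [Finset.mem_Icc]
    constructor
    · have h3 : -(N : ℝ) ≤ (z i : ℝ) := by
        have := (abs_le.mp h1).1; linarith
      exact_mod_cast h3
    · have h3 : (z i : ℝ) ≤ (N : ℝ) := le_trans (abs_le.mp h1).2 h2
      exact_mod_cast h3
  have hcard : s.card ≤ ((N + 1 - (-N)).toNat) ^ d := by
    calc s.card ≤ _ := Finset.card_le_card hsub
      _ = ((N + 1 - (-N)).toNat) ^ d := by
        rw [Fintype.card_piFinset]
        simp [Int.card_Icc]
  have h5 : N + 1 - (-N) = ((2 * ⌈r⌉₊ + 1 : ℕ) : ℤ) := by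
    rw [hN]; push_cast; ring
  have hNr : ((N + 1 - (-N)).toNat : ℝ) ≤ 5 * r := by
    have h4 : ((N + 1 - (-N)).toNat : ℝ) = 2 * (⌈r⌉₊ : ℝ) + 1 := by
      rw [h5, Int.toNat_natCast]; push_cast; ring
    have hceil : (⌈r⌉₊ : ℝ) < r + 1 := Nat.ceil_lt_add_one (by linarith)
    rw [h4]; linarith
  calc (s.card : ℝ) ≤ (((N + 1 - (-N)).toNat : ℝ)) ^ d := by exact_mod_cast hcard
    _ ≤ (5 * r) ^ d := pow_le_pow_left₀ (by positivity) hNr d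

lemma shell_sum (c L : ℝ) (hc : 0 ≤ c) (hL : 1 ≤ L) :
    ∀ (n : ℕ) (s : Finset (Fin d → ℤ)), (∀ z ∈ s, znorm z ≤ 2 ^ n * L) →
    ∑ z ∈ s, (max (znorm z) L) ^ (-c)
      ≤ 5 ^ d * L ^ ((d : ℝ) - c) + ∑ k ∈ Finset.range n, 10 ^ d * (2 ^ k * L) ^ ((d : ℝ) - c) := by
  have hL0 : (0 : ℝ) < L := lt_of_lt_of_le one_pos hL
  intro n
  induction n with
  | zero =>
    intro s hs
    simp only [Finset.range_zero, Finset.sum_empty, add_zero]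
    have hterm : ∀ z ∈ s, (max (znorm z) L) ^ (-c) ≤ L ^ (-c) := by
      intro z hz
      have h1 : znorm z ≤ L := by
        have := hs z hz; rwa [pow_zero, one_mul] at this
      rw [max_eq_right h1]
    calc ∑ z ∈ s, (max (znorm z) L) ^ (-c) ≤ ∑ _z ∈ s, L ^ (-c) := Finset.sum_le_sum hterm
      _ = (s.card : ℝ) * L ^ (-c) := by rw [Finset.sum_const, nsmul_eq_mul]
      _ ≤ (5 * L) ^ d * L ^ (-c) := by
          apply mul_le_mul_of_nonneg_right _ (Real.rpow_nonneg hL0.le _)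
          exact card_le s L hL (fun z hz => by
            have := hs z hz; rwa [pow_zero, one_mul] at this)
      _ = 5 ^ d * L ^ ((d : ℝ) - c) := by
          rw [mul_pow, ← Real.rpow_natCast L d, mul_assoc, ← Real.rpow_add hL0,
            ← sub_eq_add_neg]
  | succ n ih =>
    intro s hs
    classical
    have hsplit := (Finset.sum_filter_add_sum_filter_not s (fun z => znorm z ≤ 2 ^ n * L)
      (fun z => (max (znorm z) L) ^ (-c))).symm
    have h1 : ∑ z ∈ s.filter (fun z => znorm z ≤ 2 ^ n * L), (max (znorm z) L) ^ (-c)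
        ≤ 5 ^ d * L ^ ((d : ℝ) - c) + ∑ k ∈ Finset.range n, 10 ^ d * (2 ^ k * L) ^ ((d : ℝ) - c) :=
      ih _ (fun z hz => (Finset.mem_filter.mp hz).2)
    have hpow : (0 : ℝ) < 2 ^ n * L := by positivity
    have h2 : ∑ z ∈ s.filter (fun z => ¬ znorm z ≤ 2 ^ n * L), (max (znorm z) L) ^ (-c)
        ≤ 10 ^ d * (2 ^ n * L) ^ ((d : ℝ) - c) := by
      set s₂ := s.filter (fun z => ¬ znorm z ≤ 2 ^ n * L) with hs₂
      have hterm : ∀ z ∈ s₂, (max (znorm z) L) ^ (-c) ≤ (2 ^ n * L) ^ (-c) := by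
        intro z hz
        have h3 : 2 ^ n * L < znorm z := by
          have := (Finset.mem_filter.mp hz).2; exact lt_of_not_ge this
        exact Real.rpow_le_rpow_of_nonpos hpow
          (le_trans h3.le (le_max_left _ _)) (neg_nonpos.mpr hc)
      have hcard : (s₂.card : ℝ) ≤ (5 * (2 ^ (n+1) * L)) ^ d := by
        apply card_le _ _ _
        · intro z hz
          exact hs z (Finset.mem_filter.mp hz).1
        · have h4 : (1 : ℝ) ≤ 2 ^ (n+1) := one_le_pow₀ one_le_two
          nlinarith
      calc ∑ z ∈ s₂, (max (znorm z) L) ^ (-c) ≤ ∑ _z ∈ s₂, (2 ^ n * L) ^ (-c) :=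
            Finset.sum_le_sum hterm
        _ = (s₂.card : ℝ) * (2 ^ n * L) ^ (-c) := by rw [Finset.sum_const, nsmul_eq_mul]
        _ ≤ (5 * (2 ^ (n+1) * L)) ^ d * (2 ^ n * L) ^ (-c) := by
            apply mul_le_mul_of_nonneg_right hcard (Real.rpow_nonneg hpow.le _)
        _ = 10 ^ d * (2 ^ n * L) ^ ((d : ℝ) - c) := by
            have h5 : (5 : ℝ) * (2 ^ (n+1) * L) = 10 * (2 ^ n * L) := by ring
            rw [h5, mul_pow, ← Real.rpow_natCast (2 ^ n * L) d, mul_assoc,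
              ← Real.rpow_add hpow, ← sub_eq_add_neg]
    rw [hsplit, Finset.sum_range_succ]
    linarith

lemma pow_mul_rpow (L e : ℝ) (hL : 0 < L) (k : ℕ) :
    ((2 : ℝ) ^ k * L) ^ e = ((2 : ℝ) ^ e) ^ k * L ^ e := by
  rw [Real.mul_rpow (by positivity) hL.le]
  congr 1
  rw [← Real.rpow_natCast (2 : ℝ) k, ← Real.rpow_natCast ((2 : ℝ) ^ e) k,
    ← Real.rpow_mul (by norm_num : (0:ℝ) ≤ 2), ← Real.rpow_mul (by norm_num : (0:ℝ) ≤ 2),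
    mul_comm]

lemma exists_dyadic (L M : ℝ) (hL : 1 ≤ L) (hLM : L ≤ M) :
    ∃ n : ℕ, M ≤ 2 ^ n * L ∧ 2 ^ n * L ≤ 2 * M := by
  have hex : ∃ n : ℕ, M ≤ 2 ^ n * L := by
    obtain ⟨n, hn⟩ := pow_unbounded_of_one_lt M (one_lt_two (α := ℝ))
    exact ⟨n, le_trans hn.le (by nlinarith [pow_pos (zero_lt_two (α := ℝ)) n])⟩
  classical
  refine ⟨Nat.find hex, Nat.find_spec hex, ?_⟩
  rcases Nat.eq_zero_or_pos (Nat.find hex) with h0 | h0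
  · rw [h0]; simp; linarith
  · obtain ⟨m, hm⟩ := Nat.exists_eq_succ_of_ne_zero h0.ne'
    have hmin : ¬ M ≤ 2 ^ m * L := Nat.find_min hex (by omega)
    rw [hm]
    push_neg at hmin
    rw [pow_succ]
    nlinarith

lemma S1 (c : ℝ) (hc0 : 0 ≤ c) (hcd : c < (d : ℝ)) :
    ∃ C : ℝ, 0 < C ∧ ∀ L M : ℝ, 1 ≤ L → L ≤ M →
      ∀ s : Finset (Fin d → ℤ), (∀ z ∈ s, znorm z ≤ M) →
      ∑ z ∈ s, (max (znorm z) L) ^ (-c) ≤ C * M ^ ((d : ℝ) - c) := by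
  set e := (d : ℝ) - c with he
  have he0 : 0 < e := by rw [he]; linarith
  set q := (2 : ℝ) ^ e with hq
  have hq1 : 1 < q := (Real.one_lt_rpow_iff_of_pos two_pos).mpr (Or.inl ⟨one_lt_two, he0⟩)
  have hq0 : 0 < q - 1 := by linarith
  refine ⟨(5 ^ d + 10 ^ d / (q - 1)) * 2 ^ e, by positivity, ?_⟩
  intro L M hL hLM s hs
  have hL0 : (0 : ℝ) < L := lt_of_lt_of_le one_pos hL
  have hM0 : (0 : ℝ) < M := lt_of_lt_of_le hL0 hLM
  obtain ⟨n, hn1, hn2⟩ := exists_dyadic L M hL hLM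
  have hpos : (0 : ℝ) < 2 ^ n * L := by positivity
  have hbase := shell_sum c L hc0 hL n s (fun z hz => (hs z hz).trans hn1)
  have hgeom : ∑ k ∈ Finset.range n, 10 ^ d * ((2:ℝ) ^ k * L) ^ e
      ≤ 10 ^ d / (q - 1) * (q ^ n * L ^ e) := by
    have h1 : ∀ k ∈ Finset.range n, 10 ^ d * ((2:ℝ) ^ k * L) ^ e = 10 ^ d * L ^ e * q ^ k := by
      intro k _; rw [pow_mul_rpow L e hL0 k]; ring
    rw [Finset.sum_congr rfl h1, ← Finset.mul_sum, geom_sum_eq hq1.ne' n]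
    have h2 : (q ^ n - 1) / (q - 1) ≤ q ^ n / (q - 1) := by gcongr; linarith
    calc (10:ℝ) ^ d * L ^ e * ((q ^ n - 1) / (q - 1))
        ≤ 10 ^ d * L ^ e * (q ^ n / (q - 1)) := by
          apply mul_le_mul_of_nonneg_left h2 (by positivity)
      _ = 10 ^ d / (q - 1) * (q ^ n * L ^ e) := by ring
  have hLe : L ^ e ≤ q ^ n * L ^ e := by
    have : (1:ℝ) ≤ q ^ n := one_le_pow₀ hq1.le
    nlinarith [Real.rpow_pos_of_pos hL0 e]
  have hqn : q ^ n * L ^ e = ((2:ℝ) ^ n * L) ^ e := (pow_mul_rpow L e hL0 n).symm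
  have hfinal : ((2:ℝ) ^ n * L) ^ e ≤ 2 ^ e * M ^ e := by
    rw [← Real.mul_rpow (by norm_num) hM0.le]
    exact Real.rpow_le_rpow hpos.le hn2 he0.le
  calc ∑ z ∈ s, (max (znorm z) L) ^ (-c)
      ≤ 5 ^ d * L ^ e + 10 ^ d / (q - 1) * (q ^ n * L ^ e) := le_trans hbase (by linarith)
    _ ≤ 5 ^ d * (q ^ n * L ^ e) + 10 ^ d / (q - 1) * (q ^ n * L ^ e) := by
        apply add_le_add_left (mul_le_mul_of_nonneg_left hLe (by positivity))
    _ = (5 ^ d + 10 ^ d / (q - 1)) * ((2 ^ n * L) ^ e) := by rw [← hqn]; ring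
    _ ≤ (5 ^ d + 10 ^ d / (q - 1)) * (2 ^ e * M ^ e) := by
        apply mul_le_mul_of_nonneg_left hfinal (by positivity)
    _ = (5 ^ d + 10 ^ d / (q - 1)) * 2 ^ e * M ^ e := by ring

lemma S2 (c : ℝ) (hcd : (d : ℝ) < c) :
    ∃ C : ℝ, 0 < C ∧ ∀ L R : ℝ, 1 ≤ L → 0 ≤ R →
      ∀ s : Finset (Fin d → ℤ), (∀ z ∈ s, R ≤ znorm z) →
      ∑ z ∈ s, (max (znorm z) L) ^ (-c) ≤ C * (max R L) ^ ((d : ℝ) - c) := by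
  set e := (d : ℝ) - c with he
  have he0 : e < 0 := by rw [he]; linarith
  set q := (2 : ℝ) ^ e with hq
  have hq1 : q < 1 := Real.rpow_lt_one_of_one_lt_of_neg one_lt_two he0
  have hq0 : 0 < q := Real.rpow_pos_of_pos two_pos e
  have h1q : 0 < 1 - q := by linarith
  refine ⟨5 ^ d + 10 ^ d * (1 / (1 - q)), by positivity, ?_⟩
  intro L R hL hR s hs
  have hL0 : (0 : ℝ) < L := lt_of_lt_of_le one_pos hL
  set L' := max R L with hL'
  have hL'1 : 1 ≤ L' := le_trans hL (le_max_right _ _)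
  have hL'0 : (0 : ℝ) < L' := lt_of_lt_of_le one_pos hL'1
  have hkey : ∀ z ∈ s, max (znorm z) L = max (znorm z) L' := by
    intro z hz
    rcases le_total R L with h | h
    · rw [hL', max_eq_right h]
    · rw [hL', max_eq_left h, max_eq_left (le_trans h (hs z hz)),
        max_eq_left (hs z hz)]
  rw [Finset.sum_congr rfl (fun z hz => by rw [hkey z hz])]
  -- choose n covering s
  have hex : ∃ n : ℕ, ∀ z ∈ s, znorm z ≤ 2 ^ n * L' := by
    rcases s.eq_empty_or_nonempty with hs0 | hs0
    · exact ⟨0, by simp [hs0]⟩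
    · set B := (s.image znorm).max' (hs0.image znorm) with hB
      obtain ⟨n, hn⟩ := pow_unbounded_of_one_lt B (one_lt_two (α := ℝ))
      refine ⟨n, fun z hz => ?_⟩
      have h1 : znorm z ≤ B := Finset.le_max' _ _ (Finset.mem_image_of_mem znorm hz)
      have h2 : (0:ℝ) < 2 ^ n := by positivity
      nlinarith
  obtain ⟨n, hn⟩ := hex
  have hbase := shell_sum c L' (by linarith) hL'1 n s hn
  have hgeom : ∑ k ∈ Finset.range n, 10 ^ d * ((2:ℝ) ^ k * L') ^ e
      ≤ 10 ^ d * (1 / (1 - q)) * L' ^ e := by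
    have h1 : ∀ k ∈ Finset.range n, 10 ^ d * ((2:ℝ) ^ k * L') ^ e = 10 ^ d * L' ^ e * q ^ k := by
      intro k _; rw [pow_mul_rpow L' e hL'0 k]; ring
    rw [Finset.sum_congr rfl h1, ← Finset.mul_sum, geom_sum_eq hq1.ne n]
    have h2 : (q ^ n - 1) / (q - 1) ≤ 1 / (1 - q) := by
      have h3 : (q ^ n - 1) / (q - 1) = (1 - q ^ n) / (1 - q) := by
        rw [div_eq_div_iff (show q - 1 ≠ 0 by linarith) (show 1 - q ≠ 0 by linarith)]
        ring
      rw [h3, div_le_div_iff₀ h1q h1q]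
      nlinarith [pow_pos hq0 n]
    calc (10:ℝ) ^ d * L' ^ e * ((q ^ n - 1) / (q - 1))
        ≤ 10 ^ d * L' ^ e * (1 / (1 - q)) := by
          apply mul_le_mul_of_nonneg_left h2 (by positivity)
      _ = 10 ^ d * (1 / (1 - q)) * L' ^ e := by ring
  calc ∑ z ∈ s, (max (znorm z) L') ^ (-c)
      ≤ 5 ^ d * L' ^ e + 10 ^ d * (1 / (1 - q)) * L' ^ e := le_trans hbase (by linarith)
    _ = (5 ^ d + 10 ^ d * (1 / (1 - q))) * L' ^ e := by ring
lemma pihalf_pos : (0:ℝ) < π / 2 := by positivity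

lemma pihalf_gt_one : (1:ℝ) < π / 2 := by nlinarith [Real.pi_gt_three]

lemma veeZ_pos {d : ℕ} {z : Fin d → ℤ} {L : ℝ} (hL : 0 < L) : 0 < veeZ z L :=
  mul_pos pihalf_pos (lt_of_lt_of_le hL (le_max_right _ _))

lemma c0_pos : 0 < Real.log (π / 2) := Real.log_pos pihalf_gt_one

lemma logveeZ_eq (x : Fin d → ℤ) {L : ℝ} (hL : 0 < L) :
    logveeZ x L = Real.log (π / 2 * (max (znorm x) L / L)) := by
  unfold logveeZ
  have h : max (znorm x / L) 1 = max (znorm x) L / L := by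
    rw [← max_div_div_right hL.le, div_self hL.ne']
  rw [h]

lemma logveeZ_ge_c0 (x : Fin d → ℤ) {L : ℝ} (hL : 1 ≤ L) :
    Real.log (π / 2) ≤ logveeZ x L := by
  have hL0 : (0:ℝ) < L := by linarith
  rw [logveeZ_eq x hL0]
  have h1 : (1:ℝ) ≤ max (znorm x) L / L := by
    rw [le_div_iff₀ hL0, one_mul]; exact le_max_right _ _
  have h2 : π / 2 ≤ π / 2 * (max (znorm x) L / L) := by nlinarith [pihalf_pos]
  exact Real.log_le_log pihalf_pos h2

lemma logveeZ_pos (x : Fin d → ℤ) {L : ℝ} (hL : 1 ≤ L) : 0 < logveeZ x L :=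
  lt_of_lt_of_le c0_pos (logveeZ_ge_c0 x hL)

lemma log_comp {x y : Fin d → ℤ} {L : ℝ} (hL : 1 ≤ L)
    (hy : max (znorm x) L / 2 ≤ max (znorm y) L) :
    Real.log (π / 2) / (Real.log (π / 2) + Real.log 2) * logveeZ x L ≤ logveeZ y L := by
  have hL0 : (0:ℝ) < L := by linarith
  have hc0 : 0 < Real.log (π / 2) := c0_pos
  have hlog2 : (0:ℝ) < Real.log 2 := Real.log_pos one_lt_two
  set m := max (znorm x) L with hm
  set my := max (znorm y) L with hmy
  have hmL : L ≤ m := le_max_right _ _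
  have hm0 : (0:ℝ) < m := by linarith
  have hmy0 : (0:ℝ) < my := lt_of_lt_of_le hL0 (le_max_right _ _)
  have h1 : Real.log (π / 2) ≤ logveeZ y L := logveeZ_ge_c0 y hL
  have harg : π / 2 * (m / L) / 2 ≤ π / 2 * (my / L) := by
    have h3 : m / L / 2 ≤ my / L := by
      rw [div_div, mul_comm L 2, ← div_div]
      gcongr
    calc π / 2 * (m / L) / 2 = π / 2 * (m / L / 2) := by ring
      _ ≤ π / 2 * (my / L) := mul_le_mul_of_nonneg_left h3 pihalf_pos.le
  have h2 : logveeZ x L - Real.log 2 ≤ logveeZ y L := by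
    rw [logveeZ_eq x hL0, logveeZ_eq y hL0, ← Real.log_div (by positivity) two_ne_zero]
    exact Real.log_le_log (by positivity) harg
  have hℓ : Real.log (π / 2) ≤ logveeZ x L := logveeZ_ge_c0 x hL
  set a := Real.log (π / 2) with ha
  set b := Real.log 2 with hb
  set ℓ := logveeZ x L with hℓdef
  set ℓy := logveeZ y L with hℓydef
  rcases le_total ℓ (a + b) with h | h
  · have h4 : a / (a + b) * ℓ ≤ a := by
      rw [div_mul_eq_mul_div, div_le_iff₀ (by linarith)]
      nlinarith
    linarith
  · have h4 : a / (a + b) * ℓ ≤ ℓ - b := by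
      rw [div_mul_eq_mul_div, div_le_iff₀ (by linarith)]
      nlinarith
    linarith

lemma log_comp_half {x y : Fin d → ℤ} {L : ℝ} (hL : 1 ≤ L)
    (hy : max (znorm x) L * L ≤ (max (znorm y) L) ^ 2) :
    logveeZ x L / 2 ≤ logveeZ y L := by
  have hL0 : (0:ℝ) < L := by linarith
  set m := max (znorm x) L with hm
  set my := max (znorm y) L with hmy
  have hmL : L ≤ m := le_max_right _ _
  have hmyL : L ≤ my := le_max_right _ _
  have hm0 : (0:ℝ) < m := by linarith
  have hmy0 : (0:ℝ) < my := by linarith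
  have hexp1 : logveeZ x L = Real.log (π / 2) + Real.log (m / L) := by
    rw [logveeZ_eq x hL0, Real.log_mul pihalf_pos.ne' (by positivity)]
  have hexp2 : logveeZ y L = Real.log (π / 2) + Real.log (my / L) := by
    rw [logveeZ_eq y hL0, Real.log_mul pihalf_pos.ne' (by positivity)]
  have h1 : Real.log (m / L) ≤ 2 * Real.log (my / L) := by
    have h2 : m / L ≤ (my / L) ^ 2 := by
      rw [div_pow, div_le_div_iff₀ hL0 (by positivity)]
      calc m * L ^ 2 = (m * L) * L := by ring
        _ ≤ my ^ 2 * L := mul_le_mul_of_nonneg_right hy hL0.le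
    calc Real.log (m / L) ≤ Real.log ((my / L) ^ 2) := Real.log_le_log (by positivity) h2
      _ = 2 * Real.log (my / L) := by rw [Real.log_pow]; norm_num
  have h3 : 0 ≤ Real.log (my / L) := Real.log_nonneg ((le_div_iff₀ hL0).mpr (by linarith))
  have hc0 := c0_pos
  rw [hexp1, hexp2]
  linarith

lemma log_pow_le (p β : ℝ) (hp : 0 ≤ p) (hβ : 0 < β) :
    ∃ C : ℝ, 0 < C ∧ ∀ t : ℝ, 1 ≤ t → (Real.log (π / 2 * t)) ^ p ≤ C * t ^ β := by
  rcases eq_or_lt_of_le hp with hp0 | hp0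
  · refine ⟨1, one_pos, fun t ht => ?_⟩
    rw [← hp0, Real.rpow_zero, one_mul]
    calc (1:ℝ) = 1 ^ β := (Real.one_rpow β).symm
      _ ≤ t ^ β := Real.rpow_le_rpow zero_le_one ht hβ.le
  · set δ := β / p with hδdef
    have hδ : 0 < δ := div_pos hβ hp0
    refine ⟨((π / 2) ^ δ / δ) ^ p, by positivity, fun t ht => ?_⟩
    have ht0 : (0:ℝ) < t := by linarith
    have h0 : (0:ℝ) < π / 2 * t := by positivity
    have hlog0 : 0 ≤ Real.log (π / 2 * t) := Real.log_nonneg (by nlinarith [pihalf_gt_one])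
    have h1 : Real.log (π / 2 * t) ≤ (π / 2 * t) ^ δ / δ := Real.log_le_rpow_div h0.le hδ
    have h2 : (Real.log (π / 2 * t)) ^ p ≤ ((π / 2 * t) ^ δ / δ) ^ p :=
      Real.rpow_le_rpow hlog0 h1 hp
    have h3 : ((π / 2 * t) ^ δ / δ) ^ p = ((π / 2) ^ δ / δ) ^ p * t ^ β := by
      rw [Real.mul_rpow pihalf_pos.le ht0.le, mul_div_right_comm,
        Real.mul_rpow (by positivity) (by positivity)]
      congr 1
      rw [← Real.rpow_mul ht0.le]
      congr 1
      rw [hδdef]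
      field_simp
    exact h2.trans_eq h3
lemma S1v (c : ℝ) (hc0 : 0 ≤ c) (hcd : c < (d : ℝ)) :
    ∃ C : ℝ, 0 < C ∧ ∀ L M : ℝ, 1 ≤ L → L ≤ M →
      ∀ s : Finset (Fin d → ℤ), (∀ z ∈ s, znorm z ≤ M) →
      ∑ z ∈ s, (veeZ z L) ^ (-c) ≤ C * (π / 2 * M) ^ ((d : ℝ) - c) := by
  obtain ⟨C, hC, H⟩ := S1 (d := d) c hc0 hcd
  refine ⟨C * (π / 2) ^ (-c) / (π / 2) ^ ((d : ℝ) - c), by positivity, ?_⟩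
  intro L M hL hLM s hs
  have hL0 : (0:ℝ) < L := lt_of_lt_of_le one_pos hL
  have hM0 : (0:ℝ) < M := lt_of_lt_of_le hL0 hLM
  have h1 : ∀ z ∈ s, (veeZ z L) ^ (-c) = (π / 2) ^ (-c) * (max (znorm z) L) ^ (-c) := by
    intro z _
    unfold veeZ
    rw [Real.mul_rpow pihalf_pos.le (le_trans hL0.le (le_max_right _ _))]
  rw [Finset.sum_congr rfl h1, ← Finset.mul_sum]
  have hpe : ((π:ℝ) / 2) ^ ((d:ℝ) - c) ≠ 0 := (Real.rpow_pos_of_pos pihalf_pos _).ne'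
  calc (π / 2) ^ (-c) * ∑ z ∈ s, (max (znorm z) L) ^ (-c)
      ≤ (π / 2) ^ (-c) * (C * M ^ ((d:ℝ) - c)) :=
        mul_le_mul_of_nonneg_left (H L M hL hLM s hs) (Real.rpow_nonneg pihalf_pos.le _)
    _ = C * (π / 2) ^ (-c) / (π / 2) ^ ((d : ℝ) - c) * (π / 2 * M) ^ ((d : ℝ) - c) := by
        rw [Real.mul_rpow pihalf_pos.le hM0.le]
        field_simp

lemma S2v (c : ℝ) (hcd : (d : ℝ) < c) :
    ∃ C : ℝ, 0 < C ∧ ∀ L R : ℝ, 1 ≤ L → 0 ≤ R →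
      ∀ s : Finset (Fin d → ℤ), (∀ z ∈ s, R ≤ znorm z) →
      ∑ z ∈ s, (veeZ z L) ^ (-c) ≤ C * (π / 2 * max R L) ^ ((d : ℝ) - c) := by
  obtain ⟨C, hC, H⟩ := S2 (d := d) c hcd
  refine ⟨C * (π / 2) ^ (-c) / (π / 2) ^ ((d : ℝ) - c), by positivity, ?_⟩
  intro L R hL hR s hs
  have hL0 : (0:ℝ) < L := lt_of_lt_of_le one_pos hL
  have hRL0 : (0:ℝ) < max R L := lt_of_lt_of_le hL0 (le_max_right _ _)
  have h1 : ∀ z ∈ s, (veeZ z L) ^ (-c) = (π / 2) ^ (-c) * (max (znorm z) L) ^ (-c) := by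
    intro z _
    unfold veeZ
    rw [Real.mul_rpow pihalf_pos.le (le_trans hL0.le (le_max_right _ _))]
  rw [Finset.sum_congr rfl h1, ← Finset.mul_sum]
  have hpe : ((π:ℝ) / 2) ^ ((d:ℝ) - c) ≠ 0 := (Real.rpow_pos_of_pos pihalf_pos _).ne'
  calc (π / 2) ^ (-c) * ∑ z ∈ s, (max (znorm z) L) ^ (-c)
      ≤ (π / 2) ^ (-c) * (C * (max R L) ^ ((d:ℝ) - c)) :=
        mul_le_mul_of_nonneg_left (H L R hL hR s hs) (Real.rpow_nonneg pihalf_pos.le _)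
    _ = C * (π / 2) ^ (-c) / (π / 2) ^ ((d : ℝ) - c) * (π / 2 * max R L) ^ ((d : ℝ) - c) := by
        rw [Real.mul_rpow pihalf_pos.le hRL0.le]
        field_simp

lemma point_bound {N1 D1 N2 D2 P1 Q1 P2 Q2 : ℝ}
    (hP1 : 0 ≤ P1) (hQ1 : 0 < Q1) (hN2 : 0 ≤ N2) (hP2 : 0 ≤ P2) (hQ2 : 0 < Q2)
    (h1 : N1 ≤ P1) (h2 : Q1 ≤ D1) (h3 : N2 ≤ P2) (h4 : Q2 ≤ D2) :
    N1 / D1 * (N2 / D2) ≤ P1 / Q1 * (P2 / Q2) := by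
  have hD2 : 0 < D2 := lt_of_lt_of_le hQ2 h4
  exact mul_le_mul (div_le_div₀ hP1 h1 hQ1 h2) (div_le_div₀ hP2 h3 hQ2 h4)
    (div_nonneg hN2 hD2.le) (div_nonneg hP1 hQ1.le)
end ConvAux

set_option maxHeartbeats 2000000 in
theorem conv_bound_case_c (d : ℕ) (a₁ a₂ b₁ b₂ : ℝ)
    (ha₁ : a₁ < (d : ℝ)) (ha₂ : 0 ≤ a₂) (hb₁ : 0 < b₁) (hb₁' : b₁ ≤ a₁)
    (hb₂ : 0 ≤ b₂) (hsum : (d : ℝ) < a₁ + b₁) (hab' : a₁ = b₁ → b₂ ≤ a₂) :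
    ∃ C : ℝ, 0 < C ∧ ∀ L : ℝ, 1 ≤ L → ∀ x : Fin d → ℤ,
      (∑' y : Fin d → ℤ,
        (veeZ (x - y) L ^ (-a₁) / (logveeZ (x - y) L) ^ a₂) *
        (veeZ y L ^ (-b₁) / (logveeZ y L) ^ b₂))
      ≤ C * veeZ x L ^ ((d : ℝ) - a₁ - b₁) / (logveeZ x L) ^ b₂ := by
  classical
  have ha10 : 0 ≤ a₁ := le_trans hb₁.le hb₁'
  have hb₁d : b₁ < (d : ℝ) := lt_of_le_of_lt hb₁' ha₁
  obtain ⟨Ca, hCa, Ha⟩ := ConvAux.S1v (d := d) a₁ ha10 ha₁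
  obtain ⟨Cb, hCb, Hb⟩ := ConvAux.S1v (d := d) b₁ hb₁.le hb₁d
  obtain ⟨Cc, hCc, Hc⟩ := ConvAux.S2v (d := d) (a₁ + b₁) hsum
  obtain ⟨Cl, hCl, Hl⟩ := ConvAux.log_pow_le b₂ (((d : ℝ) - b₁) / 2) hb₂ (by linarith)
  have hc0 : 0 < Real.log (π / 2) := ConvAux.c0_pos
  have hlog2 : (0:ℝ) < Real.log 2 := Real.log_pos one_lt_two
  set c0 := Real.log (π / 2) with hc0def
  set ε := c0 / (c0 + Real.log 2) with hεdef
  have hε : 0 < ε := div_pos hc0 (by linarith)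
  set KA := Ca * c0 ^ (-a₂) * (ε ^ (-b₂) * 2 ^ b₁) with hKA
  set KB1 := Cb * 2 ^ a₁ * (c0 ^ (-a₂) * 2 ^ b₂) with hKB1
  set KB2 := Cb * Cl * (2 ^ a₁ * (c0 ^ (-a₂) * c0 ^ (-b₂))) with hKB2
  set KC := Cc * c0 ^ (-a₂) * (ε ^ (-b₂) * 2 ^ (a₁ + b₁ - (d:ℝ))) with hKC
  have hKA0 : 0 < KA := by
    apply mul_pos (mul_pos hCa (Real.rpow_pos_of_pos hc0 _))
    exact mul_pos (Real.rpow_pos_of_pos hε _) (Real.rpow_pos_of_pos two_pos _)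
  have hKB10 : 0 < KB1 := by
    apply mul_pos (mul_pos hCb (Real.rpow_pos_of_pos two_pos _))
    exact mul_pos (Real.rpow_pos_of_pos hc0 _) (Real.rpow_pos_of_pos two_pos _)
  have hKB20 : 0 < KB2 := by
    apply mul_pos (mul_pos hCb hCl)
    exact mul_pos (Real.rpow_pos_of_pos two_pos _)
      (mul_pos (Real.rpow_pos_of_pos hc0 _) (Real.rpow_pos_of_pos hc0 _))
  have hKC0 : 0 < KC := by
    apply mul_pos (mul_pos hCc (Real.rpow_pos_of_pos hc0 _))
    exact mul_pos (Real.rpow_pos_of_pos hε _) (Real.rpow_pos_of_pos two_pos _)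
  refine ⟨KA + KB1 + KB2 + KC + KC, by linarith, ?_⟩
  intro L hL x
  have hL0 : (0:ℝ) < L := by linarith
  set m := max (znorm x) L with hmdef
  have hLm : L ≤ m := le_max_right _ _
  have hm1 : (1:ℝ) ≤ m := le_trans hL hLm
  have hm0 : (0:ℝ) < m := by linarith
  have hm20 : (0:ℝ) < m / 2 := by linarith
  set ℓ := logveeZ x L with hℓdef
  have hℓc0 : c0 ≤ ℓ := by rw [hℓdef, hc0def]; exact ConvAux.logveeZ_ge_c0 x hL
  have hℓ0 : 0 < ℓ := by linarith
  set e' := (d:ℝ) - a₁ - b₁ with he'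
  have he'0 : e' < 0 := by rw [he']; linarith
  have hV0 : (0:ℝ) < π / 2 * m := mul_pos ConvAux.pihalf_pos hm0
  have hV20 : (0:ℝ) < π / 2 * (m / 2) := mul_pos ConvAux.pihalf_pos hm20
  set T : (Fin d → ℤ) → ℝ := fun y =>
    (veeZ (x - y) L ^ (-a₁) / (logveeZ (x - y) L) ^ a₂) *
    (veeZ y L ^ (-b₁) / (logveeZ y L) ^ b₂) with hT
  have hT0 : ∀ y, 0 ≤ T y := by
    intro y
    apply mul_nonneg <;> apply div_nonneg <;>
      first
        | exact Real.rpow_nonneg (le_of_lt (ConvAux.veeZ_pos hL0)) _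
        | exact Real.rpow_nonneg (le_of_lt (ConvAux.logveeZ_pos _ hL)) _
  suffices key : ∀ t : Finset (Fin d → ℤ),
      ∑ y ∈ t, T y ≤ (KA + KB1 + KB2 + KC + KC) * (π / 2 * m) ^ e' * ℓ ^ (-b₂) by
    have hsummable : Summable T := summable_of_sum_le hT0 key
    have hfin := Summable.tsum_le_of_sum_le hsummable key
    have hgoalRHS : (KA + KB1 + KB2 + KC + KC) * veeZ x L ^ ((d : ℝ) - a₁ - b₁) / (logveeZ x L) ^ b₂
        = (KA + KB1 + KB2 + KC + KC) * (π / 2 * m) ^ e' * ℓ ^ (-b₂) := by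
      rw [show veeZ x L = π / 2 * m from rfl, ← hℓdef, ← he', Real.rpow_neg hℓ0.le,
        div_eq_mul_inv]
    exact hfin.trans_eq hgoalRHS.symm
  intro t
  -- region decomposition
  set pA : (Fin d → ℤ) → Prop := fun y => znorm (x - y) ≤ m / 2 with hpA
  set pB : (Fin d → ℤ) → Prop := fun y => znorm y ≤ m / 2 with hpB
  set pB1 : (Fin d → ℤ) → Prop := fun y => m * L ≤ (max (znorm y) L) ^ 2 with hpB1
  set pC1 : (Fin d → ℤ) → Prop := fun y => znorm (x - y) ≤ znorm y with hpC1
  set tA := t.filter pA with htA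
  set tR := t.filter (fun y => ¬ pA y) with htR
  set tB := tR.filter pB with htB
  set tC := tR.filter (fun y => ¬ pB y) with htC
  set tB1 := tB.filter pB1 with htB1
  set tB2 := tB.filter (fun y => ¬ pB1 y) with htB2
  set tC1 := tC.filter pC1 with htC1
  set tC2 := tC.filter (fun y => ¬ pC1 y) with htC2
  have es1 : ∑ y ∈ t, T y = ∑ y ∈ tA, T y + ∑ y ∈ tR, T y :=
    (Finset.sum_filter_add_sum_filter_not t pA T).symm
  have es2 : ∑ y ∈ tR, T y = ∑ y ∈ tB, T y + ∑ y ∈ tC, T y :=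
    (Finset.sum_filter_add_sum_filter_not tR pB T).symm
  have es3 : ∑ y ∈ tB, T y = ∑ y ∈ tB1, T y + ∑ y ∈ tB2, T y :=
    (Finset.sum_filter_add_sum_filter_not tB pB1 T).symm
  have es4 : ∑ y ∈ tC, T y = ∑ y ∈ tC1, T y + ∑ y ∈ tC2, T y :=
    (Finset.sum_filter_add_sum_filter_not tC pC1 T).symm
  have hboundA : ∑ y ∈ tA, T y ≤ KA * (π / 2 * m) ^ e' * ℓ ^ (-b₂) := by
    set κ := c0 ^ (-a₂) * ((π / 2 * (m / 2)) ^ (-b₁) * (ε * ℓ) ^ (-b₂)) with hκ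
    have hκ0 : 0 ≤ κ := by
      apply mul_nonneg (Real.rpow_nonneg hc0.le _)
      exact mul_nonneg (Real.rpow_nonneg hV20.le _)
        (Real.rpow_nonneg (mul_nonneg hε.le hℓ0.le) _)
    have hpt : ∀ y ∈ tA, T y ≤ κ * veeZ (x - y) L ^ (-a₁) := by
      intro y hy
      have hyA : znorm (x - y) ≤ m / 2 := by
        have := (Finset.mem_filter.mp hy).2
        simpa [hpA] using this
      have hmy : m / 2 ≤ max (znorm y) L := by
        have h5 := ConvAux.max_sub_le x y L
        rw [← hmdef] at h5
        linarith
      have h1 : veeZ y L ^ (-b₁) ≤ (π / 2 * (m / 2)) ^ (-b₁) := by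
        apply Real.rpow_le_rpow_of_nonpos hV20 ?_ (neg_nonpos.mpr hb₁.le)
        exact mul_le_mul_of_nonneg_left hmy ConvAux.pihalf_pos.le
      have h2 : (ε * ℓ) ^ b₂ ≤ (logveeZ y L) ^ b₂ := by
        apply Real.rpow_le_rpow (mul_nonneg hε.le hℓ0.le) ?_ hb₂
        have h6 := ConvAux.log_comp (x := x) (y := y) hL (by rw [← hmdef]; exact hmy)
        rw [hεdef, hℓdef, hc0def]
        exact h6
      have h3 : c0 ^ a₂ ≤ (logveeZ (x - y) L) ^ a₂ := by
        apply Real.rpow_le_rpow hc0.le ?_ ha₂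
        rw [hc0def]
        exact ConvAux.logveeZ_ge_c0 _ hL
      have hstep : T y ≤ veeZ (x - y) L ^ (-a₁) / c0 ^ a₂ *
          ((π / 2 * (m / 2)) ^ (-b₁) / (ε * ℓ) ^ b₂) :=
        ConvAux.point_bound (Real.rpow_nonneg (ConvAux.veeZ_pos hL0).le _)
          (Real.rpow_pos_of_pos hc0 _) (Real.rpow_nonneg (ConvAux.veeZ_pos hL0).le _)
          (Real.rpow_nonneg hV20.le _) (Real.rpow_pos_of_pos (mul_pos hε hℓ0) _)
          le_rfl h3 h1 h2
      calc T y ≤ _ := hstep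
        _ = κ * veeZ (x - y) L ^ (-a₁) := by
            rw [hκ, Real.rpow_neg hc0.le a₂, Real.rpow_neg (mul_nonneg hε.le hℓ0.le) b₂]
            ring
    have hinj : ∀ a ∈ tA, ∀ b ∈ tA, x - a = x - b → a = b := by
      intro a _ b _ h
      exact sub_right_injective h
    have himg : ∑ y ∈ tA, veeZ (x - y) L ^ (-a₁)
        = ∑ z ∈ tA.image (fun y => x - y), veeZ z L ^ (-a₁) := by
      rw [Finset.sum_image hinj]
    have hS : ∑ z ∈ tA.image (fun y => x - y), veeZ z L ^ (-a₁)
        ≤ Ca * (π / 2 * m) ^ ((d:ℝ) - a₁) := by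
      apply Ha L m hL hLm
      intro z hz
      obtain ⟨y, hy, rfl⟩ := Finset.mem_image.mp hz
      have hyA : znorm (x - y) ≤ m / 2 := by
        have := (Finset.mem_filter.mp hy).2
        simpa [hpA] using this
      linarith
    calc ∑ y ∈ tA, T y ≤ ∑ y ∈ tA, κ * veeZ (x - y) L ^ (-a₁) := Finset.sum_le_sum hpt
      _ = κ * ∑ y ∈ tA, veeZ (x - y) L ^ (-a₁) := (Finset.mul_sum _ _ _).symm
      _ = κ * ∑ z ∈ tA.image (fun y => x - y), veeZ z L ^ (-a₁) := by rw [himg]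
      _ ≤ κ * (Ca * (π / 2 * m) ^ ((d:ℝ) - a₁)) := mul_le_mul_of_nonneg_left hS hκ0
      _ = KA * (π / 2 * m) ^ e' * ℓ ^ (-b₂) := by
          rw [hκ, hKA, he',
            show π / 2 * (m / 2) = (π / 2 * m) / 2 from by ring,
            Real.div_rpow hV0.le (by norm_num : (0:ℝ) ≤ 2),
            Real.rpow_neg (by norm_num : (0:ℝ) ≤ 2) b₁, div_eq_mul_inv, inv_inv,
            Real.mul_rpow hε.le hℓ0.le,
            show (d:ℝ) - a₁ - b₁ = ((d:ℝ) - a₁) + (-b₁) from by ring,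
            Real.rpow_add hV0]
          ring
  have hboundB1 : ∑ y ∈ tB1, T y ≤ KB1 * (π / 2 * m) ^ e' * ℓ ^ (-b₂) := by
    set κ := (π / 2 * (m / 2)) ^ (-a₁) * (c0 ^ (-a₂) * (ℓ / 2) ^ (-b₂)) with hκ
    have hκ0 : 0 ≤ κ := mul_nonneg (Real.rpow_nonneg hV20.le _)
      (mul_nonneg (Real.rpow_nonneg hc0.le _)
        (Real.rpow_nonneg (by linarith : (0:ℝ) ≤ ℓ / 2) _))
    have hpt : ∀ y ∈ tB1, T y ≤ κ * veeZ y L ^ (-b₁) := by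
      intro y hy
      have hyB : znorm y ≤ m / 2 := by
        have := (Finset.mem_filter.mp (Finset.mem_filter.mp hy).1).2
        simpa [hpB] using this
      have hyB1 : m * L ≤ (max (znorm y) L) ^ 2 := by
        have := (Finset.mem_filter.mp hy).2
        simpa [hpB1] using this
      have hmy : m / 2 ≤ max (znorm (x - y)) L := by
        have h5 := ConvAux.max_sub_le x (x - y) L
        rw [sub_sub_cancel] at h5
        rw [← hmdef] at h5
        linarith
      have h1 : veeZ (x - y) L ^ (-a₁) ≤ (π / 2 * (m / 2)) ^ (-a₁) := by
        apply Real.rpow_le_rpow_of_nonpos hV20 ?_ (neg_nonpos.mpr ha10)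
        exact mul_le_mul_of_nonneg_left hmy ConvAux.pihalf_pos.le
      have h2 : (ℓ / 2) ^ b₂ ≤ (logveeZ y L) ^ b₂ := by
        apply Real.rpow_le_rpow (by linarith) ?_ hb₂
        have h6 := ConvAux.log_comp_half (x := x) (y := y) hL (by rw [← hmdef]; exact hyB1)
        rw [hℓdef]
        exact h6
      have h3 : c0 ^ a₂ ≤ (logveeZ (x - y) L) ^ a₂ := by
        apply Real.rpow_le_rpow hc0.le ?_ ha₂
        rw [hc0def]
        exact ConvAux.logveeZ_ge_c0 _ hL
      have hstep : T y ≤ (π / 2 * (m / 2)) ^ (-a₁) / c0 ^ a₂ *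
          (veeZ y L ^ (-b₁) / (ℓ / 2) ^ b₂) :=
        ConvAux.point_bound (Real.rpow_nonneg hV20.le _) (Real.rpow_pos_of_pos hc0 _)
          (Real.rpow_nonneg (ConvAux.veeZ_pos hL0).le _)
          (Real.rpow_nonneg (ConvAux.veeZ_pos hL0).le _)
          (Real.rpow_pos_of_pos (by linarith : (0:ℝ) < ℓ / 2) _)
          h1 h3 le_rfl h2
      calc T y ≤ _ := hstep
        _ = κ * veeZ y L ^ (-b₁) := by
            rw [hκ, Real.rpow_neg hc0.le a₂, Real.rpow_neg (by linarith : (0:ℝ) ≤ ℓ / 2) b₂]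
            ring
    have hS : ∑ y ∈ tB1, veeZ y L ^ (-b₁) ≤ Cb * (π / 2 * m) ^ ((d:ℝ) - b₁) := by
      apply Hb L m hL hLm
      intro z hz
      have hz1 : znorm z ≤ m / 2 := by
        have := (Finset.mem_filter.mp (Finset.mem_filter.mp hz).1).2
        simpa [hpB] using this
      linarith
    calc ∑ y ∈ tB1, T y ≤ ∑ y ∈ tB1, κ * veeZ y L ^ (-b₁) := Finset.sum_le_sum hpt
      _ = κ * ∑ y ∈ tB1, veeZ y L ^ (-b₁) := (Finset.mul_sum _ _ _).symm
      _ ≤ κ * (Cb * (π / 2 * m) ^ ((d:ℝ) - b₁)) := mul_le_mul_of_nonneg_left hS hκ0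
      _ = KB1 * (π / 2 * m) ^ e' * ℓ ^ (-b₂) := by
          rw [hκ, hKB1, he',
            show π / 2 * (m / 2) = (π / 2 * m) / 2 from by ring,
            Real.div_rpow hV0.le (by norm_num : (0:ℝ) ≤ 2),
            Real.rpow_neg (by norm_num : (0:ℝ) ≤ 2) a₁,
            div_eq_mul_inv ((π / 2 * m) ^ (-a₁)) (((2:ℝ) ^ a₁)⁻¹), inv_inv,
            Real.div_rpow hℓ0.le (by norm_num : (0:ℝ) ≤ 2),
            Real.rpow_neg (by norm_num : (0:ℝ) ≤ 2) b₂,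
            div_eq_mul_inv (ℓ ^ (-b₂)) (((2:ℝ) ^ b₂)⁻¹), inv_inv,
            show (d:ℝ) - a₁ - b₁ = ((d:ℝ) - b₁) + (-a₁) from by ring,
            Real.rpow_add hV0]
          ring
  have hboundB2 : ∑ y ∈ tB2, T y ≤ KB2 * (π / 2 * m) ^ e' * ℓ ^ (-b₂) := by
    set M₂ := Real.sqrt (m * L) with hM₂
    have hM₂L : L ≤ M₂ := by
      rw [hM₂]
      exact (Real.le_sqrt' hL0).mpr (by nlinarith)
    have hM₂0 : (0:ℝ) < M₂ := lt_of_lt_of_le hL0 hM₂L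
    set κ := (π / 2 * (m / 2)) ^ (-a₁) * (c0 ^ (-a₂) * c0 ^ (-b₂)) with hκ
    have hκ0 : 0 ≤ κ := mul_nonneg (Real.rpow_nonneg hV20.le _)
      (mul_nonneg (Real.rpow_nonneg hc0.le _) (Real.rpow_nonneg hc0.le _))
    have hpt : ∀ y ∈ tB2, T y ≤ κ * veeZ y L ^ (-b₁) := by
      intro y hy
      have hyB : znorm y ≤ m / 2 := by
        have := (Finset.mem_filter.mp (Finset.mem_filter.mp hy).1).2
        simpa [hpB] using this
      have hmy : m / 2 ≤ max (znorm (x - y)) L := by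
        have h5 := ConvAux.max_sub_le x (x - y) L
        rw [sub_sub_cancel] at h5
        rw [← hmdef] at h5
        linarith
      have h1 : veeZ (x - y) L ^ (-a₁) ≤ (π / 2 * (m / 2)) ^ (-a₁) := by
        apply Real.rpow_le_rpow_of_nonpos hV20 ?_ (neg_nonpos.mpr ha10)
        exact mul_le_mul_of_nonneg_left hmy ConvAux.pihalf_pos.le
      have h2 : c0 ^ b₂ ≤ (logveeZ y L) ^ b₂ := by
        apply Real.rpow_le_rpow hc0.le ?_ hb₂
        rw [hc0def]
        exact ConvAux.logveeZ_ge_c0 _ hL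
      have h3 : c0 ^ a₂ ≤ (logveeZ (x - y) L) ^ a₂ := by
        apply Real.rpow_le_rpow hc0.le ?_ ha₂
        rw [hc0def]
        exact ConvAux.logveeZ_ge_c0 _ hL
      have hstep : T y ≤ (π / 2 * (m / 2)) ^ (-a₁) / c0 ^ a₂ *
          (veeZ y L ^ (-b₁) / c0 ^ b₂) :=
        ConvAux.point_bound (Real.rpow_nonneg hV20.le _) (Real.rpow_pos_of_pos hc0 _)
          (Real.rpow_nonneg (ConvAux.veeZ_pos hL0).le _)
          (Real.rpow_nonneg (ConvAux.veeZ_pos hL0).le _)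
          (Real.rpow_pos_of_pos hc0 _)
          h1 h3 le_rfl h2
      calc T y ≤ _ := hstep
        _ = κ * veeZ y L ^ (-b₁) := by
            rw [hκ, Real.rpow_neg hc0.le a₂, Real.rpow_neg hc0.le b₂]
            ring
    have hS : ∑ y ∈ tB2, veeZ y L ^ (-b₁) ≤ Cb * (π / 2 * M₂) ^ ((d:ℝ) - b₁) := by
      apply Hb L M₂ hL hM₂L
      intro z hz
      have hz2 : ¬ (m * L ≤ (max (znorm z) L) ^ 2) := by
        have := (Finset.mem_filter.mp hz).2
        simpa [hpB1] using this
      push_neg at hz2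
      have h7 : max (znorm z) L ≤ M₂ := by
        rw [hM₂]
        exact (Real.le_sqrt (le_trans hL0.le (le_max_right _ _)) (by positivity)).mpr hz2.le
      exact le_trans (le_max_left _ _) h7
    have hℓt : ℓ ^ b₂ ≤ Cl * (m / L) ^ (((d:ℝ) - b₁) / 2) := by
      have h8 := Hl (m / L) ((le_div_iff₀ hL0).mpr (by linarith))
      rw [hℓdef, ConvAux.logveeZ_eq x hL0, ← hmdef]
      exact h8
    have hkey2 : M₂ ^ ((d:ℝ) - b₁) * (m / L) ^ (((d:ℝ) - b₁) / 2) = m ^ ((d:ℝ) - b₁) := by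
      rw [hM₂, Real.sqrt_eq_rpow, ← Real.rpow_mul (by positivity : (0:ℝ) ≤ m * L),
        show 1 / 2 * ((d:ℝ) - b₁) = ((d:ℝ) - b₁) / 2 from by ring,
        ← Real.mul_rpow (by positivity) (by positivity),
        show m * L * (m / L) = m * m from by field_simp,
        show m * m = m ^ (2:ℕ) from (sq m).symm,
        ← Real.rpow_natCast m 2, ← Real.rpow_mul hm0.le,
        show ((2:ℕ):ℝ) * (((d:ℝ) - b₁) / 2) = (d:ℝ) - b₁ from by push_cast; ring]
    have hkey : (π / 2 * M₂) ^ ((d:ℝ) - b₁) ≤ Cl * (π / 2 * m) ^ ((d:ℝ) - b₁) * ℓ ^ (-b₂) := by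
      rw [Real.rpow_neg hℓ0.le, ← div_eq_mul_inv, le_div_iff₀ (Real.rpow_pos_of_pos hℓ0 _)]
      calc (π / 2 * M₂) ^ ((d:ℝ) - b₁) * ℓ ^ b₂
          ≤ (π / 2 * M₂) ^ ((d:ℝ) - b₁) * (Cl * (m / L) ^ (((d:ℝ) - b₁) / 2)) :=
            mul_le_mul_of_nonneg_left hℓt (Real.rpow_nonneg (by positivity) _)
        _ = Cl * ((π / 2) ^ ((d:ℝ) - b₁) * (M₂ ^ ((d:ℝ) - b₁) * (m / L) ^ (((d:ℝ) - b₁) / 2))) := by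
            rw [Real.mul_rpow ConvAux.pihalf_pos.le hM₂0.le]
            ring
        _ = Cl * ((π / 2) ^ ((d:ℝ) - b₁) * m ^ ((d:ℝ) - b₁)) := by rw [hkey2]
        _ = Cl * (π / 2 * m) ^ ((d:ℝ) - b₁) := by
            rw [Real.mul_rpow ConvAux.pihalf_pos.le hm0.le]
    calc ∑ y ∈ tB2, T y ≤ ∑ y ∈ tB2, κ * veeZ y L ^ (-b₁) := Finset.sum_le_sum hpt
      _ = κ * ∑ y ∈ tB2, veeZ y L ^ (-b₁) := (Finset.mul_sum _ _ _).symm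
      _ ≤ κ * (Cb * (π / 2 * M₂) ^ ((d:ℝ) - b₁)) := mul_le_mul_of_nonneg_left hS hκ0
      _ ≤ κ * (Cb * (Cl * (π / 2 * m) ^ ((d:ℝ) - b₁) * ℓ ^ (-b₂))) := by
          exact mul_le_mul_of_nonneg_left (mul_le_mul_of_nonneg_left hkey hCb.le) hκ0
      _ = KB2 * (π / 2 * m) ^ e' * ℓ ^ (-b₂) := by
          rw [hκ, hKB2, he',
            show π / 2 * (m / 2) = (π / 2 * m) / 2 from by ring,
            Real.div_rpow hV0.le (by norm_num : (0:ℝ) ≤ 2),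
            Real.rpow_neg (by norm_num : (0:ℝ) ≤ 2) a₁,
            div_eq_mul_inv ((π / 2 * m) ^ (-a₁)) (((2:ℝ) ^ a₁)⁻¹), inv_inv,
            show (d:ℝ) - a₁ - b₁ = ((d:ℝ) - b₁) + (-a₁) from by ring,
            Real.rpow_add hV0]
          ring
  have hmemC : ∀ y ∈ tC, m / 2 ≤ znorm (x - y) ∧ m / 2 ≤ znorm y := by
    intro y hy
    have h5 : ¬ pA y := (Finset.mem_filter.mp (Finset.mem_filter.mp hy).1).2
    have h6 : ¬ pB y := (Finset.mem_filter.mp hy).2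
    simp only [hpA] at h5
    simp only [hpB] at h6
    exact ⟨le_of_not_ge h5, le_of_not_ge h6⟩
  have hboundC1 : ∑ y ∈ tC1, T y ≤ KC * (π / 2 * m) ^ e' * ℓ ^ (-b₂) := by
    set κ := c0 ^ (-a₂) * (ε * ℓ) ^ (-b₂) with hκ
    have hκ0 : 0 ≤ κ := mul_nonneg (Real.rpow_nonneg hc0.le _)
      (Real.rpow_nonneg (mul_nonneg hε.le hℓ0.le) _)
    have hpt : ∀ y ∈ tC1, T y ≤ κ * veeZ (x - y) L ^ (-(a₁ + b₁)) := by
      intro y hy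
      have hyC := hmemC y (Finset.mem_filter.mp hy).1
      have hyC1 : znorm (x - y) ≤ znorm y := by
        have := (Finset.mem_filter.mp hy).2
        simpa [hpC1] using this
      have hmy : m / 2 ≤ max (znorm y) L := le_trans hyC.2 (le_max_left _ _)
      have h1 : veeZ y L ^ (-b₁) ≤ veeZ (x - y) L ^ (-b₁) := by
        apply Real.rpow_le_rpow_of_nonpos (ConvAux.veeZ_pos hL0) ?_ (neg_nonpos.mpr hb₁.le)
        exact mul_le_mul_of_nonneg_left (max_le_max hyC1 le_rfl) ConvAux.pihalf_pos.le
      have h2 : (ε * ℓ) ^ b₂ ≤ (logveeZ y L) ^ b₂ := by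
        apply Real.rpow_le_rpow (mul_nonneg hε.le hℓ0.le) ?_ hb₂
        have h6 := ConvAux.log_comp (x := x) (y := y) hL (by rw [← hmdef]; exact hmy)
        rw [hεdef, hℓdef, hc0def]
        exact h6
      have h3 : c0 ^ a₂ ≤ (logveeZ (x - y) L) ^ a₂ := by
        apply Real.rpow_le_rpow hc0.le ?_ ha₂
        rw [hc0def]
        exact ConvAux.logveeZ_ge_c0 _ hL
      have hstep : T y ≤ veeZ (x - y) L ^ (-a₁) / c0 ^ a₂ *
          (veeZ (x - y) L ^ (-b₁) / (ε * ℓ) ^ b₂) :=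
        ConvAux.point_bound (Real.rpow_nonneg (ConvAux.veeZ_pos hL0).le _)
          (Real.rpow_pos_of_pos hc0 _) (Real.rpow_nonneg (ConvAux.veeZ_pos hL0).le _)
          (Real.rpow_nonneg (ConvAux.veeZ_pos hL0).le _)
          (Real.rpow_pos_of_pos (mul_pos hε hℓ0) _)
          le_rfl h3 h1 h2
      calc T y ≤ _ := hstep
        _ = κ * (veeZ (x - y) L ^ (-a₁) * veeZ (x - y) L ^ (-b₁)) := by
            rw [hκ, Real.rpow_neg hc0.le a₂, Real.rpow_neg (mul_nonneg hε.le hℓ0.le) b₂]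
            ring
        _ = κ * veeZ (x - y) L ^ (-(a₁ + b₁)) := by
            rw [← Real.rpow_add (ConvAux.veeZ_pos hL0),
              show -a₁ + -b₁ = -(a₁ + b₁) from by ring]
    have hinj : ∀ a ∈ tC1, ∀ b ∈ tC1, x - a = x - b → a = b :=
      fun a _ b _ h => sub_right_injective h
    have himg : ∑ y ∈ tC1, veeZ (x - y) L ^ (-(a₁ + b₁))
        = ∑ z ∈ tC1.image (fun y => x - y), veeZ z L ^ (-(a₁ + b₁)) := by
      rw [Finset.sum_image hinj]
    have hS : ∑ z ∈ tC1.image (fun y => x - y), veeZ z L ^ (-(a₁ + b₁))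
        ≤ Cc * (π / 2 * max (m / 2) L) ^ ((d:ℝ) - (a₁ + b₁)) := by
      apply Hc L (m / 2) hL hm20.le
      intro z hz
      obtain ⟨y, hy, rfl⟩ := Finset.mem_image.mp hz
      exact (hmemC y (Finset.mem_filter.mp hy).1).1
    have hmax : (π / 2 * max (m / 2) L) ^ ((d:ℝ) - (a₁ + b₁))
        ≤ (π / 2 * (m / 2)) ^ ((d:ℝ) - (a₁ + b₁)) :=
      Real.rpow_le_rpow_of_nonpos hV20
        (mul_le_mul_of_nonneg_left (le_max_left _ _) ConvAux.pihalf_pos.le) (by linarith)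
    calc ∑ y ∈ tC1, T y ≤ ∑ y ∈ tC1, κ * veeZ (x - y) L ^ (-(a₁ + b₁)) :=
          Finset.sum_le_sum hpt
      _ = κ * ∑ y ∈ tC1, veeZ (x - y) L ^ (-(a₁ + b₁)) := (Finset.mul_sum _ _ _).symm
      _ = κ * ∑ z ∈ tC1.image (fun y => x - y), veeZ z L ^ (-(a₁ + b₁)) := by rw [himg]
      _ ≤ κ * (Cc * (π / 2 * max (m / 2) L) ^ ((d:ℝ) - (a₁ + b₁))) :=
          mul_le_mul_of_nonneg_left hS hκ0
      _ ≤ κ * (Cc * (π / 2 * (m / 2)) ^ ((d:ℝ) - (a₁ + b₁))) := by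
          exact mul_le_mul_of_nonneg_left (mul_le_mul_of_nonneg_left hmax hCc.le) hκ0
      _ = KC * (π / 2 * m) ^ e' * ℓ ^ (-b₂) := by
          rw [hκ, hKC, he',
            show π / 2 * (m / 2) = (π / 2 * m) / 2 from by ring,
            Real.div_rpow hV0.le (by norm_num : (0:ℝ) ≤ 2),
            show (d:ℝ) - (a₁ + b₁) = -(a₁ + b₁ - (d:ℝ)) from by ring,
            Real.rpow_neg (by norm_num : (0:ℝ) ≤ 2) (a₁ + b₁ - (d:ℝ)),
            div_eq_mul_inv ((π / 2 * m) ^ (-(a₁ + b₁ - (d:ℝ)))) (((2:ℝ) ^ (a₁ + b₁ - (d:ℝ)))⁻¹),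
            inv_inv,
            Real.mul_rpow hε.le hℓ0.le,
            show (d:ℝ) - a₁ - b₁ = -(a₁ + b₁ - (d:ℝ)) from by ring]
          ring
  have hboundC2 : ∑ y ∈ tC2, T y ≤ KC * (π / 2 * m) ^ e' * ℓ ^ (-b₂) := by
    set κ := c0 ^ (-a₂) * (ε * ℓ) ^ (-b₂) with hκ
    have hκ0 : 0 ≤ κ := mul_nonneg (Real.rpow_nonneg hc0.le _)
      (Real.rpow_nonneg (mul_nonneg hε.le hℓ0.le) _)
    have hpt : ∀ y ∈ tC2, T y ≤ κ * veeZ y L ^ (-(a₁ + b₁)) := by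
      intro y hy
      have hyC := hmemC y (Finset.mem_filter.mp hy).1
      have hyC2 : znorm y ≤ znorm (x - y) := by
        have := (Finset.mem_filter.mp hy).2
        simp only [hpC1] at this
        exact le_of_not_ge this
      have hmy : m / 2 ≤ max (znorm y) L := le_trans hyC.2 (le_max_left _ _)
      have h1 : veeZ (x - y) L ^ (-a₁) ≤ veeZ y L ^ (-a₁) := by
        apply Real.rpow_le_rpow_of_nonpos (ConvAux.veeZ_pos hL0) ?_ (neg_nonpos.mpr ha10)
        exact mul_le_mul_of_nonneg_left (max_le_max hyC2 le_rfl) ConvAux.pihalf_pos.le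
      have h2 : (ε * ℓ) ^ b₂ ≤ (logveeZ y L) ^ b₂ := by
        apply Real.rpow_le_rpow (mul_nonneg hε.le hℓ0.le) ?_ hb₂
        have h6 := ConvAux.log_comp (x := x) (y := y) hL (by rw [← hmdef]; exact hmy)
        rw [hεdef, hℓdef, hc0def]
        exact h6
      have h3 : c0 ^ a₂ ≤ (logveeZ (x - y) L) ^ a₂ := by
        apply Real.rpow_le_rpow hc0.le ?_ ha₂
        rw [hc0def]
        exact ConvAux.logveeZ_ge_c0 _ hL
      have hstep : T y ≤ veeZ y L ^ (-a₁) / c0 ^ a₂ *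
          (veeZ y L ^ (-b₁) / (ε * ℓ) ^ b₂) :=
        ConvAux.point_bound (Real.rpow_nonneg (ConvAux.veeZ_pos hL0).le _)
          (Real.rpow_pos_of_pos hc0 _) (Real.rpow_nonneg (ConvAux.veeZ_pos hL0).le _)
          (Real.rpow_nonneg (ConvAux.veeZ_pos hL0).le _)
          (Real.rpow_pos_of_pos (mul_pos hε hℓ0) _)
          h1 h3 le_rfl h2
      calc T y ≤ _ := hstep
        _ = κ * (veeZ y L ^ (-a₁) * veeZ y L ^ (-b₁)) := by
            rw [hκ, Real.rpow_neg hc0.le a₂, Real.rpow_neg (mul_nonneg hε.le hℓ0.le) b₂]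
            ring
        _ = κ * veeZ y L ^ (-(a₁ + b₁)) := by
            rw [← Real.rpow_add (ConvAux.veeZ_pos hL0),
              show -a₁ + -b₁ = -(a₁ + b₁) from by ring]
    have hS : ∑ y ∈ tC2, veeZ y L ^ (-(a₁ + b₁))
        ≤ Cc * (π / 2 * max (m / 2) L) ^ ((d:ℝ) - (a₁ + b₁)) := by
      apply Hc L (m / 2) hL hm20.le
      intro z hz
      exact (hmemC z (Finset.mem_filter.mp hz).1).2
    have hmax : (π / 2 * max (m / 2) L) ^ ((d:ℝ) - (a₁ + b₁))
        ≤ (π / 2 * (m / 2)) ^ ((d:ℝ) - (a₁ + b₁)) :=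
      Real.rpow_le_rpow_of_nonpos hV20
        (mul_le_mul_of_nonneg_left (le_max_left _ _) ConvAux.pihalf_pos.le) (by linarith)
    calc ∑ y ∈ tC2, T y ≤ ∑ y ∈ tC2, κ * veeZ y L ^ (-(a₁ + b₁)) := Finset.sum_le_sum hpt
      _ = κ * ∑ y ∈ tC2, veeZ y L ^ (-(a₁ + b₁)) := (Finset.mul_sum _ _ _).symm
      _ ≤ κ * (Cc * (π / 2 * max (m / 2) L) ^ ((d:ℝ) - (a₁ + b₁))) :=
          mul_le_mul_of_nonneg_left hS hκ0
      _ ≤ κ * (Cc * (π / 2 * (m / 2)) ^ ((d:ℝ) - (a₁ + b₁))) := by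
          exact mul_le_mul_of_nonneg_left (mul_le_mul_of_nonneg_left hmax hCc.le) hκ0
      _ = KC * (π / 2 * m) ^ e' * ℓ ^ (-b₂) := by
          rw [hκ, hKC, he',
            show π / 2 * (m / 2) = (π / 2 * m) / 2 from by ring,
            Real.div_rpow hV0.le (by norm_num : (0:ℝ) ≤ 2),
            show (d:ℝ) - (a₁ + b₁) = -(a₁ + b₁ - (d:ℝ)) from by ring,
            Real.rpow_neg (by norm_num : (0:ℝ) ≤ 2) (a₁ + b₁ - (d:ℝ)),
            div_eq_mul_inv ((π / 2 * m) ^ (-(a₁ + b₁ - (d:ℝ)))) (((2:ℝ) ^ (a₁ + b₁ - (d:ℝ)))⁻¹),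
            inv_inv,
            Real.mul_rpow hε.le hℓ0.le,
            show (d:ℝ) - a₁ - b₁ = -(a₁ + b₁ - (d:ℝ)) from by ring]
          ring
  have hexpand : (KA + KB1 + KB2 + KC + KC) * (π / 2 * m) ^ e' * ℓ ^ (-b₂)
      = KA * (π / 2 * m) ^ e' * ℓ ^ (-b₂) + KB1 * (π / 2 * m) ^ e' * ℓ ^ (-b₂)
        + KB2 * (π / 2 * m) ^ e' * ℓ ^ (-b₂) + KC * (π / 2 * m) ^ e' * ℓ ^ (-b₂)
        + KC * (π / 2 * m) ^ e' * ℓ ^ (-b₂) := by ring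
  rw [es1, es2, es3, es4, hexpand]
  linarith
end

section
/- For x, y ∈ ℝ^d with x ≠ 0 and |y| ≤ |x|/3, and for d ≥ 3, there is a constant C = C(d) such that |½(|x+y|^{2−d}/log|x+y| + |x−y|^{2−d}/log|x−y|) − |x|^{2−d}/log|x|| ≤ C |y|² |x|^{−d}/log|x|, provided |x| ≥ e. -/
open Real

noncomputable def auxF (b s : ℝ) : ℝ := 2 * s ^ b / Real.log s
noncomputable def auxF1 (b s : ℝ) : ℝ :=
  (2*b*Real.log s - 2) * s ^ (b-1) / (Real.log s)^2
noncomputable def auxF2 (b s : ℝ) : ℝ :=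
  ((2*b*Real.log s - 2)*(b-1) + 2*b) * s ^ (b-2) / (Real.log s)^2
    - (2*(2*b*Real.log s - 2)) * s ^ (b-2) / (Real.log s)^3

theorem abs_auxF1_le (b s : ℝ) (hs0 : 0 < s) (hL : 1 ≤ Real.log s) :
    |auxF1 b s| ≤ (2*|b|+2) * s ^ (b-1) / Real.log s := by
  set L := Real.log s with hLdef
  have hL0 : 0 < L := lt_of_lt_of_le one_pos hL
  have hr : (0:ℝ) ≤ s ^ (b-1) := (Real.rpow_pos_of_pos hs0 _).le
  have hnum : |2*b*L - 2| ≤ (2*|b|+2) * L := by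
    have h1 : |2*b*L - 2| ≤ |2*b*L| + 2 := by
      calc |2*b*L - 2| ≤ |2*b*L| + |(2:ℝ)| := abs_sub _ _
      _ = |2*b*L| + 2 := by norm_num
    have h2 : |2*b*L| = 2*|b| * L := by
      rw [abs_mul, abs_mul, abs_of_pos hL0]; norm_num
    nlinarith [abs_nonneg b]
  have heq : |auxF1 b s| = |2*b*L - 2| * s ^ (b-1) / L^2 := by
    rw [auxF1, abs_div, abs_mul, abs_of_nonneg hr, abs_of_nonneg (sq_nonneg L)]
  rw [heq]
  calc |2*b*L - 2| * s ^ (b-1) / L^2 ≤ ((2*|b|+2)*L) * s ^ (b-1) / L^2 := by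
        gcongr
  _ = (2*|b|+2) * s ^ (b-1) / L := by field_simp

theorem abs_auxF2_le (b s : ℝ) (hs0 : 0 < s) (hL : 1 ≤ Real.log s) :
    |auxF2 b s| ≤ ((2*|b|+2)*(|b|+1) + 2*|b| + (4*|b|+4)) * s ^ (b-2) / Real.log s := by
  set L := Real.log s with hLdef
  have hL0 : 0 < L := lt_of_lt_of_le one_pos hL
  have hr : (0:ℝ) ≤ s ^ (b-2) := (Real.rpow_pos_of_pos hs0 _).le
  have hb0 : (0:ℝ) ≤ |b| := abs_nonneg b
  have h2 : |2*b*L| = 2*|b| * L := by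
    rw [abs_mul, abs_mul, abs_of_pos hL0]; norm_num
  have hnum1 : |(2*b*L - 2)*(b-1) + 2*b| ≤ ((2*|b|+2)*(|b|+1) + 2*|b|) * L := by
    have h1 : |(2*b*L - 2)*(b-1) + 2*b| ≤ |2*b*L - 2| * |b-1| + 2*|b| := by
      calc |(2*b*L - 2)*(b-1) + 2*b| ≤ |(2*b*L - 2)*(b-1)| + |2*b| := abs_add_le _ _
      _ = |2*b*L - 2| * |b-1| + 2*|b| := by rw [abs_mul, abs_mul]; norm_num
    have h3 : |2*b*L - 2| ≤ 2*|b| * L + 2 := by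
      calc |2*b*L - 2| ≤ |2*b*L| + |(2:ℝ)| := abs_sub _ _
      _ = 2*|b| * L + 2 := by rw [h2]; norm_num
    have h4 : |b-1| ≤ |b| + 1 := by
      calc |b-1| ≤ |b| + |(1:ℝ)| := abs_sub _ _
      _ = |b| + 1 := by norm_num
    nlinarith [abs_nonneg (2*b*L - 2), abs_nonneg (b-1), mul_le_mul h3 h4 (abs_nonneg _) (by positivity)]
  have hnum2 : |2*(2*b*L - 2)| ≤ (4*|b|+4) * L := by
    have h3 : |2*b*L - 2| ≤ 2*|b| * L + 2 := by
      calc |2*b*L - 2| ≤ |2*b*L| + |(2:ℝ)| := abs_sub _ _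
      _ = 2*|b| * L + 2 := by rw [h2]; norm_num
    rw [abs_mul, abs_two]
    nlinarith
  have htri : |auxF2 b s| ≤ |(2*b*L - 2)*(b-1) + 2*b| * s ^ (b-2) / L^2
      + |2*(2*b*L - 2)| * s ^ (b-2) / L^3 := by
    rw [auxF2]
    calc |((2*b*L - 2)*(b-1) + 2*b) * s ^ (b-2) / L^2 - (2*(2*b*L - 2)) * s ^ (b-2) / L^3|
        ≤ |((2*b*L - 2)*(b-1) + 2*b) * s ^ (b-2) / L^2| + |(2*(2*b*L - 2)) * s ^ (b-2) / L^3| :=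
          abs_sub _ _
    _ = |(2*b*L - 2)*(b-1) + 2*b| * s ^ (b-2) / L^2 + |2*(2*b*L - 2)| * s ^ (b-2) / L^3 := by
          rw [abs_div, abs_mul, abs_div, abs_mul, abs_of_nonneg hr,
            abs_of_nonneg (sq_nonneg L), abs_of_nonneg (by positivity : (0:ℝ) ≤ L^3)]
  calc |auxF2 b s| ≤ |(2*b*L - 2)*(b-1) + 2*b| * s ^ (b-2) / L^2
      + |2*(2*b*L - 2)| * s ^ (b-2) / L^3 := htri
  _ ≤ (((2*|b|+2)*(|b|+1) + 2*|b|) * L) * s ^ (b-2) / L^2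
      + ((4*|b|+4) * L) * s ^ (b-2) / L^3 := by gcongr
  _ = ((2*|b|+2)*(|b|+1) + 2*|b|) * s ^ (b-2) / L
      + (4*|b|+4) * s ^ (b-2) / L^2 := by field_simp
  _ ≤ ((2*|b|+2)*(|b|+1) + 2*|b|) * s ^ (b-2) / L
      + (4*|b|+4) * s ^ (b-2) / L := by
        gcongr <;> nlinarith
  _ = ((2*|b|+2)*(|b|+1) + 2*|b| + (4*|b|+4)) * s ^ (b-2) / L := by ring
theorem hasDerivAt_auxF (b s : ℝ) (hs : 1 < s) : HasDerivAt (auxF b) (auxF1 b s) s := by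
  have hs0 : (0:ℝ) < s := lt_trans one_pos hs
  have hlog : Real.log s ≠ 0 := ne_of_gt (Real.log_pos hs)
  have h1 : HasDerivAt (fun s : ℝ => 2 * s ^ b) (2 * (b * s ^ (b-1))) s :=
    (Real.hasDerivAt_rpow_const (Or.inl hs0.ne')).const_mul 2
  have h2 : HasDerivAt Real.log s⁻¹ s := Real.hasDerivAt_log hs0.ne'
  have h3 := h1.div h2 hlog
  refine h3.congr_deriv ?_
  unfold auxF1
  rw [Real.rpow_sub_one hs0.ne']
  field_simp

theorem hasDerivAt_auxF1 (b s : ℝ) (hs : 1 < s) : HasDerivAt (auxF1 b) (auxF2 b s) s := by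
  have hs0 : (0:ℝ) < s := lt_trans one_pos hs
  have hlog : Real.log s ≠ 0 := ne_of_gt (Real.log_pos hs)
  have hN : HasDerivAt (fun s : ℝ => (2*b*Real.log s - 2) * s ^ (b-1))
      ((2*b*s⁻¹) * s^(b-1) + (2*b*Real.log s - 2) * ((b-1) * s^(b-1-1))) s :=
    (((Real.hasDerivAt_log hs0.ne').const_mul (2*b)).sub_const 2).mul
      (Real.hasDerivAt_rpow_const (Or.inl hs0.ne'))
  have hD : HasDerivAt (fun s : ℝ => (Real.log s)^2) (2 * Real.log s * s⁻¹) s := by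
    have := (Real.hasDerivAt_log hs0.ne').pow 2
    refine this.congr_deriv ?_
    simp
  have h3 := hN.div hD (pow_ne_zero 2 hlog)
  refine h3.congr_deriv ?_
  unfold auxF2
  rw [show b-1-1 = b-2 by ring,
    show (b-2 : ℝ) = b - 1 - 1 by ring,
    Real.rpow_sub hs0 (b-1) 1, Real.rpow_one]
  field_simp
  ring

set_option maxHeartbeats 2000000 in
theorem taylor_symmetrized_log (d : ℕ) (hd : 3 ≤ d) :
    ∃ C : ℝ, 0 < C ∧ ∀ x y : EuclideanSpace ℝ (Fin d), x ≠ 0 →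
      ‖y‖ ≤ ‖x‖ / 3 → Real.exp 1 ≤ ‖x‖ →
      |(1 / 2) * (‖x + y‖ ^ ((2 : ℝ) - d) / Real.log ‖x + y‖
          + ‖x - y‖ ^ ((2 : ℝ) - d) / Real.log ‖x - y‖)
        - ‖x‖ ^ ((2 : ℝ) - d) / Real.log ‖x‖|
      ≤ C * ‖y‖ ^ 2 * ‖x‖ ^ (-(d : ℝ)) / Real.log ‖x‖ := by
  set b : ℝ := ((2:ℝ) - d) / 2 with hb
  set K0 : ℝ := (2*|b|+2)*(|b|+1) + 2*|b| + (4*|b|+4) with hK0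
  set c1 : ℝ := ((2:ℝ)/3) ^ (2*b-4) with hc1
  set c2 : ℝ := ((2:ℝ)/3) ^ (2*b-2) with hc2
  have hc1p : 0 < c1 := Real.rpow_pos_of_pos (by norm_num) _
  have hc2p : 0 < c2 := Real.rpow_pos_of_pos (by norm_num) _
  have hK0p : 0 < K0 := by rw [hK0]; positivity
  clear_value K0 c1 c2
  have hbneg : b ≤ 0 := by
    rw [hb]
    have : (3:ℝ) ≤ (d:ℝ) := by exact_mod_cast hd
    linarith
  refine ⟨9*K0*c1 + (4*|b|+4)*c2, ?_, ?_⟩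
  · have h1 : 0 < 9*K0*c1 := by positivity
    have h2 : 0 ≤ (4*|b|+4)*c2 := by positivity
    linarith
  intro x y hx0 hy hex
  have hXpos : 0 < ‖x‖ := norm_pos_iff.mpr hx0
  have he94 : (9:ℝ)/4 ≤ Real.exp 1 := by nlinarith [Real.exp_one_gt_d9]
  have hX94 : (9:ℝ)/4 ≤ ‖x‖ := le_trans he94 hex
  have hX1 : (1:ℝ) < ‖x‖ := by linarith
  have hlogX : 1 ≤ Real.log ‖x‖ := (Real.le_log_iff_exp_le hXpos).mpr hex
  have hlogXpos : 0 < Real.log ‖x‖ := lt_of_lt_of_le one_pos hlogX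
  have hyn : (0:ℝ) ≤ ‖y‖ := norm_nonneg y
  set ip : ℝ := (inner ℝ x y : ℝ) with hipdef
  set p : ℝ → ℝ := fun t => ‖x‖^2 + 2*t*ip + t^2*‖y‖^2 with hp
  set q : ℝ → ℝ := fun t => 2*ip + 2*t*‖y‖^2 with hq
  clear_value p q
  have hpval : ∀ t : ℝ, ‖x + t • y‖^2 = p t := by
    intro t
    simp only [hp]
    rw [norm_add_sq_real, real_inner_smul_right, norm_smul]
    simp only [Real.norm_eq_abs, mul_pow, sq_abs]
    ring
  have hlow : ∀ t : ℝ, |t| ≤ 1 → ((2/3)*‖x‖)^2 ≤ p t := by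
    intro t ht
    rw [← hpval]
    have h1 : ‖x‖ ≤ ‖x + t • y‖ + ‖t • y‖ := by
      calc ‖x‖ = ‖(x + t • y) + (-(t • y))‖ := by congr 1; abel
      _ ≤ ‖x + t • y‖ + ‖-(t • y)‖ := norm_add_le _ _
      _ = ‖x + t • y‖ + ‖t • y‖ := by rw [norm_neg]
    have h2 : ‖t • y‖ ≤ ‖x‖/3 := by
      rw [norm_smul, Real.norm_eq_abs]
      calc |t| * ‖y‖ ≤ 1 * (‖x‖/3) := mul_le_mul ht hy hyn (by norm_num)
      _ = ‖x‖/3 := by norm_num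
    have h3 : (2/3)*‖x‖ ≤ ‖x + t • y‖ := by linarith
    exact pow_le_pow_left₀ (by positivity) h3 2
  have hp49 : ∀ t : ℝ, |t| ≤ 1 → (4/9)*‖x‖^2 ≤ p t := by
    intro t ht; have := hlow t ht; nlinarith
  have hXsq : (81:ℝ)/16 ≤ ‖x‖^2 := by nlinarith
  have hXle : ‖x‖ ≤ (4/9)*‖x‖^2 := by nlinarith
  have hp1 : ∀ t : ℝ, |t| ≤ 1 → 1 < p t := by
    intro t ht; have := hp49 t ht; linarith
  have hpX : ∀ t : ℝ, |t| ≤ 1 → ‖x‖ ≤ p t := by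
    intro t ht; have := hp49 t ht; linarith
  have hplog : ∀ t : ℝ, |t| ≤ 1 → 1 ≤ Real.log (p t) := by
    intro t ht
    have h0 : 0 < p t := lt_trans one_pos (hp1 t ht)
    refine (Real.le_log_iff_exp_le h0).mpr ?_
    have h49 := hp49 t ht
    have hee : Real.exp 1 * ((9:ℝ)/4) ≤ ‖x‖ * ‖x‖ :=
      mul_le_mul hex hX94 (by norm_num) hXpos.le
    nlinarith [Real.exp_pos 1]
  have hplogX : ∀ t : ℝ, |t| ≤ 1 → Real.log ‖x‖ ≤ Real.log (p t) := fun t ht =>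
    Real.log_le_log hXpos (hpX t ht)
  -- derivatives of p and q
  have hderp : ∀ t : ℝ, HasDerivAt p (q t) t := by
    intro t
    simp only [hp, hq]
    have h1 : HasDerivAt (fun t : ℝ => 2*t*ip) (2*ip) t := by
      simpa using ((hasDerivAt_id t).const_mul 2).mul_const ip
    have h2 : HasDerivAt (fun t : ℝ => t^2*‖y‖^2) (2*t*‖y‖^2) t := by
      simpa using (hasDerivAt_pow 2 t).mul_const (‖y‖^2)
    have := ((hasDerivAt_const t (‖x‖^2)).add h1).add h2; rw [zero_add] at this; exact this
  have hderq : ∀ t : ℝ, HasDerivAt q (2*‖y‖^2) t := by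
    intro t
    simp only [hq]
    have h2 : HasDerivAt (fun t : ℝ => 2*t*‖y‖^2) (2*‖y‖^2) t := by
      simpa using ((hasDerivAt_id t).const_mul 2).mul_const (‖y‖^2)
    simpa using h2.const_add (2*ip)
  have hf : ∀ t : ℝ, |t| ≤ 1 →
      HasDerivAt (fun t => auxF b (p t)) (auxF1 b (p t) * q t) t := by
    intro t ht
    exact (hasDerivAt_auxF b (p t) (hp1 t ht)).comp t (hderp t)
  have hf1 : ∀ t : ℝ, |t| ≤ 1 →
      HasDerivAt (fun t => auxF1 b (p t) * q t)
        (auxF2 b (p t) * q t * q t + auxF1 b (p t) * (2*‖y‖^2)) t := by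
    intro t ht
    exact ((hasDerivAt_auxF1 b (p t) (hp1 t ht)).comp t (hderp t)).mul (hderq t)
  -- the bound M on the second derivative
  set M : ℝ := (9*K0*c1 + (4*|b|+4)*c2) * ‖y‖^2 * ‖x‖ ^ (-(d:ℝ)) / Real.log ‖x‖ with hM
  clear_value M
  have hM0 : 0 ≤ M := by
    rw [hM]
    have h1 : 0 < 9*K0*c1 := by positivity
    have h2 : 0 ≤ (4*|b|+4)*c2 := by positivity
    have h3 : (0:ℝ) ≤ ‖x‖ ^ (-(d:ℝ)) := (Real.rpow_pos_of_pos hXpos _).le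
    positivity
  have hMb : ∀ t : ℝ, |t| ≤ 1 →
      |auxF2 b (p t) * q t * q t + auxF1 b (p t) * (2*‖y‖^2)| ≤ M := by
    intro t ht
    have hPs : 0 < p t := lt_trans one_pos (hp1 t ht)
    have hL1 : 1 ≤ Real.log (p t) := hplog t ht
    have hL0 : 0 < Real.log (p t) := lt_of_lt_of_le one_pos hL1
    have hA2 := abs_auxF2_le b (p t) hPs hL1
    rw [← hK0] at hA2
    have hA1 := abs_auxF1_le b (p t) hPs hL1
    have hipb : |ip| ≤ ‖x‖*‖y‖ := abs_real_inner_le_norm x y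
    have hq3 : |q t| ≤ 3*‖x‖*‖y‖ := by
      have habs : |q t| ≤ 2*|ip| + 2*|t| *‖y‖^2 := by
        calc |q t| = |2*ip + 2*t*‖y‖^2| := by simp only [hq]
        _ ≤ |2*ip| + |2*t*‖y‖^2| := abs_add_le _ _
        _ = 2*|ip| + 2*|t| *‖y‖^2 := by
            rw [abs_mul, abs_mul, abs_mul, abs_two, abs_of_nonneg (sq_nonneg ‖y‖)]
      nlinarith [mul_nonneg (sub_nonneg.mpr ht) (sq_nonneg ‖y‖),
        mul_nonneg (sub_nonneg.mpr hy) hyn, mul_nonneg hXpos.le hyn, abs_nonneg t]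
    have hball : ∀ c : ℝ, c ≤ 0 → (p t) ^ c ≤ ((2/3:ℝ))^(2*c) * ‖x‖^(2*c) := by
      intro c hc
      calc (p t) ^ c ≤ (((2/3)*‖x‖)^2) ^ c :=
            Real.rpow_le_rpow_of_nonpos (by positivity) (hlow t ht) hc
      _ = (((2/3)*‖x‖) ^ ((2:ℕ):ℝ)) ^ c := by rw [Real.rpow_natCast]
      _ = ((2/3)*‖x‖) ^ ((2:ℝ)*c) := by
            rw [← Real.rpow_mul (by positivity)]; norm_num
      _ = (2/3:ℝ)^(2*c) * ‖x‖^(2*c) := Real.mul_rpow (by norm_num) hXpos.le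
    have hub2 : (p t) ^ (b-2) ≤ c1 * ‖x‖^(2*b-4) := by
      have := hball (b-2) (by linarith)
      rw [show (2:ℝ)*(b-2) = 2*b-4 by ring] at this
      rw [hc1]; exact this
    have hub1 : (p t) ^ (b-1) ≤ c2 * ‖x‖^(2*b-2) := by
      have := hball (b-1) (by linarith)
      rw [show (2:ℝ)*(b-1) = 2*b-2 by ring] at this
      rw [hc2]; exact this
    have hXX : ‖x‖^(2*b-4) * ‖x‖^2 = ‖x‖ ^ (-(d:ℝ)) := by
      rw [← Real.rpow_natCast ‖x‖ 2, ← Real.rpow_add hXpos]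
      congr 1
      rw [hb]; push_cast; ring
    have hXX2 : ‖x‖^(2*b-2) = ‖x‖ ^ (-(d:ℝ)) := by
      congr 1
      rw [hb]; ring
    have hr2 : (0:ℝ) ≤ (p t) ^ (b-2) := (Real.rpow_pos_of_pos hPs _).le
    have hr1 : (0:ℝ) ≤ (p t) ^ (b-1) := (Real.rpow_pos_of_pos hPs _).le
    calc |auxF2 b (p t) * q t * q t + auxF1 b (p t) * (2*‖y‖^2)|
        ≤ |auxF2 b (p t) * q t * q t| + |auxF1 b (p t) * (2*‖y‖^2)| := abs_add_le _ _
    _ = |auxF2 b (p t)| * |q t| * |q t| + |auxF1 b (p t)| * (2*‖y‖^2) := by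
        rw [abs_mul, abs_mul, abs_mul, abs_of_nonneg (by positivity : (0:ℝ) ≤ 2*‖y‖^2)]
    _ ≤ (K0 * (p t)^(b-2) / Real.log (p t)) * (3*‖x‖*‖y‖) * (3*‖x‖*‖y‖)
        + ((2*|b|+2) * (p t)^(b-1) / Real.log (p t)) * (2*‖y‖^2) := by
        gcongr
    _ ≤ (K0 * (c1 * ‖x‖^(2*b-4)) / Real.log (p t)) * (3*‖x‖*‖y‖) * (3*‖x‖*‖y‖)
        + ((2*|b|+2) * (c2 * ‖x‖^(2*b-2)) / Real.log (p t)) * (2*‖y‖^2) := by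
        gcongr
    _ = (9*K0*c1) * ((‖x‖^(2*b-4) * ‖x‖^2) * ‖y‖^2) / Real.log (p t)
        + ((4*|b|+4)*c2) * (‖x‖^(2*b-2) * ‖y‖^2) / Real.log (p t) := by ring
    _ = (9*K0*c1 + (4*|b|+4)*c2) * ‖y‖^2 * ‖x‖ ^ (-(d:ℝ)) / Real.log (p t) := by
        rw [hXX, hXX2]; ring
    _ ≤ (9*K0*c1 + (4*|b|+4)*c2) * ‖y‖^2 * ‖x‖ ^ (-(d:ℝ)) / Real.log ‖x‖ := by
        have hnum : (0:ℝ) ≤ (9*K0*c1 + (4*|b|+4)*c2) * ‖y‖^2 * ‖x‖ ^ (-(d:ℝ)) := by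
          have h1 : 0 < 9*K0*c1 := by positivity
          have h2 : 0 ≤ (4*|b|+4)*c2 := by positivity
          have h3 : (0:ℝ) ≤ ‖x‖ ^ (-(d:ℝ)) := (Real.rpow_pos_of_pos hXpos _).le
          positivity
        exact div_le_div_of_nonneg_left hnum hlogXpos (hplogX t ht)
    _ = M := hM.symm
  have key1 : ∀ s t : ℝ, s ∈ Set.Icc (-1:ℝ) 1 → t ∈ Set.Icc (-1:ℝ) 1 →
      |auxF1 b (p t) * q t - auxF1 b (p s) * q s| ≤ M * |t - s| := by
    intro s t hs ht
    have h := Convex.norm_image_sub_le_of_norm_hasDerivWithin_le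
      (f := fun t => auxF1 b (p t) * q t)
      (f' := fun t => auxF2 b (p t) * q t * q t + auxF1 b (p t) * (2*‖y‖^2))
      (s := Set.Icc (-1:ℝ) 1)
      (fun u hu => (hf1 u (abs_le.mpr ⟨hu.1, hu.2⟩)).hasDerivWithinAt)
      (fun u hu => by simpa [Real.norm_eq_abs] using hMb u (abs_le.mpr ⟨hu.1, hu.2⟩))
      (convex_Icc _ _) hs ht
    simpa [Real.norm_eq_abs] using h
  have hg : ∀ t : ℝ, t ∈ Set.Icc (0:ℝ) 1 →
      HasDerivAt (fun t => auxF b (p t) + auxF b (p (-t)))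
        (auxF1 b (p t) * q t + (auxF1 b (p (-t)) * q (-t)) * (-1)) t := by
    intro t ht
    have h1 := hf t (by rw [abs_of_nonneg ht.1]; exact ht.2)
    have hmt : |(-t : ℝ)| ≤ 1 := by rw [abs_neg, abs_of_nonneg ht.1]; exact ht.2
    have h2 : HasDerivAt (fun t : ℝ => auxF b (p (-t)))
        ((auxF1 b (p (-t)) * q (-t)) * (-1)) t :=
      (hf (-t) hmt).comp t (hasDerivAt_neg' t)
    exact h1.add h2
  have hgb : ∀ t : ℝ, t ∈ Set.Icc (0:ℝ) 1 →
      |auxF1 b (p t) * q t + (auxF1 b (p (-t)) * q (-t)) * (-1)| ≤ 2*M := by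
    intro t ht
    have h := key1 (-t) t ⟨by linarith [ht.2], by linarith [ht.1]⟩
      ⟨by linarith [ht.1], by linarith [ht.2]⟩
    have h2 : |t - (-t)| ≤ 2 := by
      rw [sub_neg_eq_add, abs_of_nonneg (by linarith [ht.1] : (0:ℝ) ≤ t + t)]
      linarith [ht.2]
    calc |auxF1 b (p t) * q t + (auxF1 b (p (-t)) * q (-t)) * (-1)|
        = |auxF1 b (p t) * q t - auxF1 b (p (-t)) * q (-t)| := by
          rw [mul_neg_one, ← sub_eq_add_neg]
    _ ≤ M * |t - (-t)| := h
    _ ≤ M * 2 := mul_le_mul_of_nonneg_left h2 hM0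
    _ = 2*M := by ring
  have key2 : |(auxF b (p 1) + auxF b (p (-1))) - (auxF b (p 0) + auxF b (p 0))| ≤ 2*M := by
    have h := Convex.norm_image_sub_le_of_norm_hasDerivWithin_le
      (f := fun t => auxF b (p t) + auxF b (p (-t)))
      (f' := fun t => auxF1 b (p t) * q t + (auxF1 b (p (-t)) * q (-t)) * (-1))
      (s := Set.Icc (0:ℝ) 1)
      (fun u hu => (hg u hu).hasDerivWithinAt)
      (fun u hu => by simpa [Real.norm_eq_abs] using hgb u hu)
      (convex_Icc _ _) (⟨le_refl 0, by norm_num⟩ : (0:ℝ) ∈ Set.Icc (0:ℝ) 1)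
      (⟨by norm_num, le_refl 1⟩ : (1:ℝ) ∈ Set.Icc (0:ℝ) 1)
    simpa [Real.norm_eq_abs, neg_zero] using h
  have hval : ∀ z : EuclideanSpace ℝ (Fin d),
      auxF b (‖z‖^2) = ‖z‖ ^ ((2:ℝ)-d) / Real.log ‖z‖ := by
    intro z
    rw [auxF]
    have h1 : ((‖z‖^2 : ℝ)) ^ b = ‖z‖ ^ ((2:ℝ)-d) := by
      rw [← Real.rpow_natCast ‖z‖ 2, ← Real.rpow_mul (norm_nonneg z)]
      congr 1
      rw [hb]; push_cast; ring
    have h2 : Real.log (‖z‖^2) = 2 * Real.log ‖z‖ := by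
      rw [Real.log_pow]; push_cast; ring
    rw [h1, h2, mul_div_mul_left _ _ (two_ne_zero)]
  have e1 : ‖x + y‖ ^ ((2:ℝ)-d) / Real.log ‖x + y‖ = auxF b (p 1) := by
    rw [← hval, ← hpval 1, one_smul]
  have e2 : ‖x - y‖ ^ ((2:ℝ)-d) / Real.log ‖x - y‖ = auxF b (p (-1)) := by
    rw [← hval, ← hpval (-1), neg_one_smul, ← sub_eq_add_neg]
  have e3 : ‖x‖ ^ ((2:ℝ)-d) / Real.log ‖x‖ = auxF b (p 0) := by
    rw [← hval, ← hpval 0, zero_smul, add_zero]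
  rw [e1, e2, e3]
  calc |(1/2) * (auxF b (p 1) + auxF b (p (-1))) - auxF b (p 0)|
      = (1/2) * |(auxF b (p 1) + auxF b (p (-1))) - (auxF b (p 0) + auxF b (p 0))| := by
        have hre : (1:ℝ)/2 * (auxF b (p 1) + auxF b (p (-1))) - auxF b (p 0)
            = (1/2) * ((auxF b (p 1) + auxF b (p (-1))) - (auxF b (p 0) + auxF b (p 0))) := by
          ring
        rw [hre, abs_mul, abs_of_pos (show (0:ℝ) < 1/2 by norm_num)]
  _ ≤ (1/2) * (2*M) := mul_le_mul_of_nonneg_left key2 (by norm_num)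
  _ = M := by ring
end

section
/- Let d > 2 and c > 0. For every integer n ≥ 2, ∫₀^{n^{-1/4}} r^{d-1} e^{-n r² log(π/(2r))} dr ≤ C (n log(πn/2))^{-d/2} for a constant C = C(d) < ∞. -/
open Real MeasureTheory

theorem Dn_sup_main_integral (d c : ℝ) (hd : 2 < d) (hc : 0 < c) :
    ∃ C : ℝ, 0 < C ∧ ∀ n : ℕ, 2 ≤ n →
      (∫ r in Set.Ioo (0 : ℝ) ((n : ℝ) ^ (-(1 : ℝ) / 4)),
          r ^ (d - 1) * Real.exp (-(n : ℝ) * r ^ 2 * Real.log (Real.pi / (2 * r))))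
        ≤ C * ((n : ℝ) * Real.log (Real.pi * n / 2)) ^ (-d / 2) := by
  have hΓ : 0 < Real.Gamma (d / 2) := Real.Gamma_pos_of_pos (by linarith)
  refine ⟨(1 / 2) * Real.Gamma (d / 2) * (1 / 4 : ℝ) ^ (-d / 2), by positivity, ?_⟩
  intro n hn
  have hn1 : (1 : ℝ) ≤ (n : ℝ) := by exact_mod_cast Nat.one_le_of_lt hn
  have hn0 : (0 : ℝ) < (n : ℝ) := by linarith
  set L : ℝ := Real.log (Real.pi * n / 2) with hL
  have hpi2 : (1 : ℝ) < Real.pi / 2 := by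
    have := Real.pi_gt_three; linarith
  have hL0 : 0 < L := by
    rw [hL]
    apply Real.log_pos
    have : (1 : ℝ) < Real.pi / 2 * n := by
      calc (1:ℝ) < Real.pi / 2 * 1 := by linarith
      _ ≤ Real.pi / 2 * n := by nlinarith
    linarith [this]  -- π * n / 2 = π/2 * n
  have hLeq : Real.pi * ↑n / 2 = Real.pi / 2 * n := by ring
  have ha : 0 < (n : ℝ) * L / 4 := by positivity
  set a : ℝ := (n : ℝ) * L / 4 with haa
  set T : ℝ := (n : ℝ) ^ (-(1 : ℝ) / 4) with hT
  -- pointwise bound on Ioo 0 T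
  have key : ∀ r ∈ Set.Ioo (0 : ℝ) T,
      r ^ (d - 1) * Real.exp (-(n : ℝ) * r ^ 2 * Real.log (Real.pi / (2 * r)))
        ≤ r ^ (d - 1) * Real.exp (-a * r ^ 2) := by
    intro r hr
    obtain ⟨hr0, hrT⟩ := hr
    have hlog : L / 4 ≤ Real.log (Real.pi / (2 * r)) := by
      have hp : (0:ℝ) < (n : ℝ) ^ ((1 : ℝ) / 4) := Real.rpow_pos_of_pos hn0 _
      have hTeq : T = ((n : ℝ) ^ ((1 : ℝ) / 4))⁻¹ := by
        rw [hT, ← Real.rpow_neg (le_of_lt hn0)]; norm_num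
      have hrT' : r < ((n : ℝ) ^ ((1 : ℝ) / 4))⁻¹ := by rwa [hTeq] at hrT
      have h1 : (n : ℝ) ^ ((1 : ℝ) / 4) ≤ 1 / r := by
        rw [le_div_iff₀ hr0]
        nlinarith [mul_inv_cancel₀ (ne_of_gt hp)]
      have h2 : Real.pi / 2 * (n : ℝ) ^ ((1 : ℝ) / 4) ≤ Real.pi / (2 * r) := by
        have : Real.pi / (2 * r) = Real.pi / 2 * (1 / r) := by
          field_simp
        rw [this]
        have hpi0 : (0:ℝ) < Real.pi / 2 := by linarith
        nlinarith [h1, hpi0]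
      have h3 : Real.log (Real.pi / 2 * (n : ℝ) ^ ((1 : ℝ) / 4))
          ≤ Real.log (Real.pi / (2 * r)) := by
        apply Real.log_le_log (by positivity) h2
      have h4 : Real.log (Real.pi / 2 * (n : ℝ) ^ ((1 : ℝ) / 4))
          = Real.log (Real.pi / 2) + (1 / 4) * Real.log n := by
        rw [Real.log_mul (by positivity) (by positivity), Real.log_rpow hn0]
      have h5 : L = Real.log (Real.pi / 2) + Real.log n := by
        rw [hL, hLeq, Real.log_mul (by positivity) (by positivity)]
      have hlp : 0 < Real.log (Real.pi / 2) := Real.log_pos hpi2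
      rw [h5]
      rw [h4] at h3
      linarith
    have hexp : -(n : ℝ) * r ^ 2 * Real.log (Real.pi / (2 * r)) ≤ -a * r ^ 2 := by
      have hr2 : 0 ≤ r ^ 2 := sq_nonneg r
      have : a * r ^ 2 ≤ (n : ℝ) * r ^ 2 * Real.log (Real.pi / (2 * r)) := by
        rw [haa]
        have := mul_le_mul_of_nonneg_left hlog (by positivity : (0:ℝ) ≤ (n:ℝ) * r ^ 2)
        calc (n : ℝ) * L / 4 * r ^ 2 = (n : ℝ) * r ^ 2 * (L / 4) := by ring
        _ ≤ (n : ℝ) * r ^ 2 * Real.log (Real.pi / (2 * r)) := this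
      linarith
    have hpow : (0:ℝ) ≤ r ^ (d - 1) := Real.rpow_nonneg (le_of_lt hr0) _
    exact mul_le_mul_of_nonneg_left (Real.exp_le_exp.mpr hexp) hpow
  -- integrability of the Gaussian majorant
  have hgint : IntegrableOn (fun r : ℝ => r ^ (d - 1) * Real.exp (-a * r ^ 2))
      (Set.Ioi (0:ℝ)) := integrableOn_rpow_mul_exp_neg_mul_sq ha (by linarith)
  have hgIoo : IntegrableOn (fun r : ℝ => r ^ (d - 1) * Real.exp (-a * r ^ 2))
      (Set.Ioo (0:ℝ) T) := hgint.mono_set Set.Ioo_subset_Ioi_self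
  -- value of the Gaussian integral
  have hval : (∫ r in Set.Ioi (0:ℝ), r ^ (d - 1) * Real.exp (-a * r ^ 2))
      = a ^ (-d / 2) * (1 / 2) * Real.Gamma (d / 2) := by
    have := integral_rpow_mul_exp_neg_mul_rpow (p := 2) (q := d - 1) (b := a)
      zero_lt_two (by linarith) ha
    rw [show -(d - 1 + 1) / 2 = -d / 2 by ring, show (d - 1 + 1) / 2 = d / 2 by ring] at this
    rw [← this]
    refine setIntegral_congr_fun measurableSet_Ioi (fun x hx => ?_)
    rw [← Real.rpow_two]
  -- RHS rewrite
  have hRHS : (1 / 2) * Real.Gamma (d / 2) * (1 / 4 : ℝ) ^ (-d / 2)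
      * ((n : ℝ) * L) ^ (-d / 2) = a ^ (-d / 2) * (1 / 2) * Real.Gamma (d / 2) := by
    have hsplit : a ^ (-d / 2) = ((n : ℝ) * L) ^ (-d / 2) * (1 / 4 : ℝ) ^ (-d / 2) := by
      rw [show a = ((n : ℝ) * L) * (1 / 4) by rw [haa]; ring,
        Real.mul_rpow (mul_nonneg (le_of_lt hn0) (le_of_lt hL0)) (by norm_num)]
    rw [hsplit]; ring
  rw [hL] at *
  by_cases hf : IntegrableOn
      (fun r : ℝ => r ^ (d - 1) * Real.exp (-(n : ℝ) * r ^ 2 * Real.log (Real.pi / (2 * r))))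
      (Set.Ioo (0:ℝ) T)
  · calc (∫ r in Set.Ioo (0 : ℝ) T,
          r ^ (d - 1) * Real.exp (-(n : ℝ) * r ^ 2 * Real.log (Real.pi / (2 * r))))
        ≤ ∫ r in Set.Ioo (0:ℝ) T, r ^ (d - 1) * Real.exp (-a * r ^ 2) :=
          setIntegral_mono_on hf hgIoo measurableSet_Ioo key
      _ ≤ ∫ r in Set.Ioi (0:ℝ), r ^ (d - 1) * Real.exp (-a * r ^ 2) := by
          apply setIntegral_mono_set hgint
          · filter_upwards [ae_restrict_mem measurableSet_Ioi] with x hx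
            exact mul_nonneg (Real.rpow_nonneg (le_of_lt hx) _) (Real.exp_nonneg _)
          · exact Filter.Eventually.of_forall Set.Ioo_subset_Ioi_self
      _ = (1 / 2) * Real.Gamma (d / 2) * (1 / 4 : ℝ) ^ (-d / 2)
            * ((n : ℝ) * Real.log (Real.pi * n / 2)) ^ (-d / 2) := by
          rw [hval, ← hRHS]
  · rw [integral_undef hf]
    positivity
end

section
/- Let d ≥ 6 and C > 0. If G : ℤ^d → ℝ satisfies 0 ≤ G(x) ≤ δ_{0,x} + C (max(|x|,1))^{2-d}/log(max(|x|,e)) for all x, then the triangle sum ∑_{x,y ∈ ℤ^d} G(x) G(y−x) G(−y) = G^{*3}(0) is finite. -/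
set_option maxHeartbeats 1000000

open Real

namespace TriangleAux

open Finset

def sn {d : ℕ} (x : Fin d → ℤ) : ℕ := Finset.univ.sup fun i => (x i).natAbs

noncomputable def zbox (d M : ℕ) : Finset (Fin d → ℤ) := Fintype.piFinset fun _ => Finset.Icc (-(M:ℤ)) (M:ℤ)

lemma mem_zbox {d M : ℕ} {x : Fin d → ℤ} : x ∈ zbox d M ↔ sn x ≤ M := by
  simp only [zbox, Fintype.mem_piFinset, Finset.mem_Icc, sn, Finset.sup_le_iff,
    Finset.mem_univ, true_implies]
  constructor
  · intro h i; have := h i; omega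
  · intro h i; have := h i; omega

lemma sn_eq_zero {d : ℕ} {x : Fin d → ℤ} : sn x = 0 ↔ x = 0 := by
  constructor
  · intro h
    funext i
    have : (x i).natAbs ≤ 0 := h ▸ Finset.le_sup (f := fun i => (x i).natAbs) (mem_univ i)
    simpa using by omega
  · intro h; subst h; simp [sn]

lemma card_zbox (d M : ℕ) : (zbox d M).card = (2*M+1)^d := by
  simp only [zbox, Fintype.card_piFinset, Int.card_Icc]
  rw [Finset.prod_const, Finset.card_univ, Fintype.card_fin]
  congr 1
  omega

lemma pow_sub_le (a b k : ℕ) (hba : b ≤ a) (hab : a ≤ b + 2) :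
    a^(k+1) ≤ b^(k+1) + 2*(k+1)*a^k := by
  induction k with
  | zero => simpa using hab
  | succ k ih =>
    calc a^(k+2) = a * a^(k+1) := by ring
    _ ≤ a * (b^(k+1) + 2*(k+1)*a^k) := Nat.mul_le_mul_left a ih
    _ = a * b^(k+1) + 2*(k+1)*a^(k+1) := by ring
    _ ≤ (b+2) * b^(k+1) + 2*(k+1)*a^(k+1) := by
        exact Nat.add_le_add_right (Nat.mul_le_mul_right _ hab) _
    _ = b^(k+2) + 2*b^(k+1) + 2*(k+1)*a^(k+1) := by ring
    _ ≤ b^(k+2) + 2*a^(k+1) + 2*(k+1)*a^(k+1) := by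
        have := Nat.pow_le_pow_left hba (k+1); omega
    _ = b^(k+2) + 2*(k+2)*a^(k+1) := by ring

lemma sum_zbox (d M : ℕ) (g : ℕ → ℝ) :
    ∑ x ∈ zbox d M, g (sn x) =
      g 0 + ∑ n ∈ Finset.Icc 1 M, (((2*n+1)^d - (2*n-1)^d : ℕ) : ℝ) * g n := by
  induction M with
  | zero =>
    have hb : zbox d 0 = {(0 : Fin d → ℤ)} := by
      ext x
      simp [mem_zbox, Nat.le_zero, sn_eq_zero, Finset.mem_singleton]
    simp [hb, sn_eq_zero.2 rfl]
  | succ M ih =>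
    have hsub : zbox d M ⊆ zbox d (M+1) := by
      intro x hx; rw [mem_zbox] at *; omega
    have hsplit := Finset.sum_sdiff (f := fun x => g (sn x)) hsub
    have hdiff : ∑ x ∈ zbox d (M+1) \ zbox d M, g (sn x) =
        (((2*(M+1)+1)^d - (2*(M+1)-1)^d : ℕ) : ℝ) * g (M+1) := by
      have hsn : ∀ x ∈ zbox d (M+1) \ zbox d M, g (sn x) = g (M+1) := by
        intro x hx
        simp only [Finset.mem_sdiff, mem_zbox] at hx
        congr 1
        omega
      rw [Finset.sum_congr rfl hsn, Finset.sum_const, Finset.card_sdiff_of_subset hsub,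
        card_zbox, card_zbox, nsmul_eq_mul]
      have h21 : 2*(M+1)-1 = 2*M+1 := by omega
      rw [h21]
    rw [← hsplit, hdiff, ih, Finset.sum_Icc_succ_top (by omega : 1 ≤ M + 1)]
    ring

lemma summableA {d : ℕ} (hd : 0 < d) (g : ℕ → ℝ) (hg : ∀ n, 0 ≤ g n)
    (hs : Summable fun n : ℕ => (n:ℝ)^(d-1) * g n) :
    Summable (fun x : Fin d → ℤ => g (sn x)) := by
  apply summable_of_sum_le (c := g 0 + 2*d*3^(d-1) * ∑' n : ℕ, (n:ℝ)^(d-1) * g n)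
    (fun x => hg _)
  intro u
  set M : ℕ := u.sup sn with hM
  have hu : u ⊆ zbox d M := fun x hx => mem_zbox.2 (Finset.le_sup hx)
  calc ∑ x ∈ u, g (sn x) ≤ ∑ x ∈ zbox d M, g (sn x) :=
        Finset.sum_le_sum_of_subset_of_nonneg hu (fun x _ _ => hg _)
  _ = g 0 + ∑ n ∈ Finset.Icc 1 M, (((2*n+1)^d - (2*n-1)^d : ℕ) : ℝ) * g n := sum_zbox d M g
  _ ≤ g 0 + ∑ n ∈ Finset.Icc 1 M, (2*d*3^(d-1) : ℝ) * ((n:ℝ)^(d-1) * g n) := by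
      apply add_le_add_right
      apply Finset.sum_le_sum
      intro n hn
      rw [Finset.mem_Icc] at hn
      rw [← mul_assoc]
      apply mul_le_mul_of_nonneg_right _ (hg n)
      have h1 : ((2*n+1)^d - (2*n-1)^d : ℕ) ≤ 2*d*(3*n)^(d-1) := by
        obtain ⟨k, hk⟩ : ∃ k, d = k + 1 := ⟨d - 1, by omega⟩
        subst hk
        have h2 := pow_sub_le (2*n+1) (2*n-1) k (by omega) (by omega)
        have h3 : (2*n+1)^k ≤ (3*n)^k := Nat.pow_le_pow_left (by omega) k
        simp only [Nat.add_sub_cancel]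
        calc (2*n+1)^(k+1) - (2*n-1)^(k+1) ≤ 2*(k+1)*(2*n+1)^k := by omega
        _ ≤ 2*(k+1)*(3*n)^k := Nat.mul_le_mul_left _ h3
      calc (((2*n+1)^d - (2*n-1)^d : ℕ) : ℝ) ≤ ((2*d*(3*n)^(d-1) : ℕ) : ℝ) := by
            exact_mod_cast h1
      _ = (2*d*3^(d-1) : ℝ) * (n:ℝ)^(d-1) := by
            push_cast [mul_pow]
            ring
  _ = g 0 + 2*d*3^(d-1) * ∑ n ∈ Finset.Icc 1 M, ((n:ℝ)^(d-1) * g n) := by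
      rw [Finset.mul_sum]
  _ ≤ g 0 + 2*d*3^(d-1) * ∑' n : ℕ, (n:ℝ)^(d-1) * g n := by
      apply add_le_add_right
      apply mul_le_mul_of_nonneg_left _ (by positivity)
      exact Summable.sum_le_tsum _ (fun n _ => mul_nonneg (by positivity) (hg n)) hs

lemma logser : Summable (fun n : ℕ => ((n:ℝ))⁻¹ * (max (Real.log n) 1) ^ (-(3/2 : ℝ))) := by
  rw [← summable_condensed_iff_of_nonneg]
  · have hmaj : Summable (fun n : ℕ => (2:ℝ)^(3/2:ℝ) * ((max (n:ℝ) 1) ^ (-(3/2:ℝ)))) := by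
      apply Summable.mul_left
      rw [← summable_nat_add_iff 1]
      have : (fun n : ℕ => (max ((n+1 : ℕ):ℝ) 1) ^ (-(3/2:ℝ)))
          = (fun n : ℕ => ((n+1 : ℕ):ℝ) ^ (-(3/2:ℝ))) := by
        funext n
        congr 1
        exact max_eq_left (by exact_mod_cast Nat.one_le_iff_ne_zero.2 (Nat.succ_ne_zero n))
      rw [this]
      exact (summable_nat_add_iff 1).2 (Real.summable_nat_rpow.2 (by norm_num))
    apply Summable.of_nonneg_of_le _ _ hmaj
    · intro n
      positivity
    · intro n
      have h2 : (0:ℝ) < 2^n := by positivity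
      push_cast
      rw [mul_inv_cancel_left₀ (ne_of_gt h2), Real.log_pow]
      set b : ℝ := max (n:ℝ) 1 with hb
      have hb0 : (0:ℝ) < b := lt_of_lt_of_le one_pos (le_max_right _ _)
      have hkey : b / 2 ≤ max ((n:ℕ) * Real.log 2) 1 := by
        rcases le_or_gt (n:ℝ) 1 with h | h
        · have : b = 1 := max_eq_right h
          rw [this]
          calc (1:ℝ)/2 ≤ 1 := by norm_num
          _ ≤ _ := le_max_right _ _
        · have hbn : b = (n:ℝ) := max_eq_left h.le
          rw [hbn]
          have hlog : (1:ℝ)/2 ≤ Real.log 2 :=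
            le_trans (by norm_num) Real.log_two_gt_d9.le
          calc (n:ℝ)/2 = (n:ℝ) * (1/2) := by ring
          _ ≤ (n:ℝ) * Real.log 2 := by
                apply mul_le_mul_of_nonneg_left hlog (by positivity)
          _ ≤ _ := le_max_left _ _
      calc (max ((n:ℕ) * Real.log 2) 1 : ℝ) ^ (-(3/2:ℝ)) ≤ (b/2) ^ (-(3/2:ℝ)) := by
            exact Real.rpow_le_rpow_of_nonpos (by positivity) hkey (by norm_num)
      _ = 2 ^ (3/2:ℝ) * b ^ (-(3/2:ℝ)) := by
            rw [div_eq_mul_inv, Real.mul_rpow hb0.le (by norm_num),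
              ← Real.rpow_neg_one (2:ℝ), ← Real.rpow_mul (by norm_num)]
            rw [mul_comm]
            norm_num
  · intro n; positivity
  · intro m n hm hmn
    apply mul_le_mul
    · exact inv_anti₀ (by exact_mod_cast hm) (by exact_mod_cast hmn)
    · apply Real.rpow_le_rpow_of_nonpos (lt_of_lt_of_le one_pos (le_max_right _ _))
        _ (by norm_num)
      exact max_le_max (Real.log_le_log (by exact_mod_cast hm) (by exact_mod_cast hmn)) le_rfl
    · positivity
    · positivity

lemma amgm3 {a b c : ℝ} (ha : 0 ≤ a) (hb : 0 ≤ b) (hc : 0 ≤ c) :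
    a * b * c ≤ 1/3 * (a*b)^(3/2:ℝ) + (1/3 * (b*c)^(3/2:ℝ) + 1/3 * (c*a)^(3/2:ℝ)) := by
  have hab : (0:ℝ) ≤ a*b := mul_nonneg ha hb
  have hbc : (0:ℝ) ≤ b*c := mul_nonneg hb hc
  have hca : (0:ℝ) ≤ c*a := mul_nonneg hc ha
  have h := Real.geom_mean_le_arith_mean3_weighted (by norm_num : (0:ℝ) ≤ 1/3)
    (by norm_num : (0:ℝ) ≤ 1/3) (by norm_num : (0:ℝ) ≤ 1/3)
    (Real.rpow_nonneg hab (3/2)) (Real.rpow_nonneg hbc (3/2))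
    (Real.rpow_nonneg hca (3/2)) (by norm_num)
  have e1 : ((a*b)^(3/2:ℝ))^(1/3:ℝ) = (a*b)^(1/2:ℝ) := by
    rw [← Real.rpow_mul hab]; norm_num
  have e2 : ((b*c)^(3/2:ℝ))^(1/3:ℝ) = (b*c)^(1/2:ℝ) := by
    rw [← Real.rpow_mul hbc]; norm_num
  have e3 : ((c*a)^(3/2:ℝ))^(1/3:ℝ) = (c*a)^(1/2:ℝ) := by
    rw [← Real.rpow_mul hca]; norm_num
  rw [e1, e2, e3] at h
  have e4 : (a*b)^(1/2:ℝ) * (b*c)^(1/2:ℝ) * (c*a)^(1/2:ℝ) = a*b*c := by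
    rw [← Real.mul_rpow hab hbc, ← Real.mul_rpow (mul_nonneg hab hbc) hca,
      show a*b*(b*c)*(c*a) = (a*b*c)^2 by ring,
      ← Real.rpow_natCast (a*b*c) 2, ← Real.rpow_mul (mul_nonneg (mul_nonneg ha hb) hc)]
    norm_num
  rw [e4] at h
  linarith

lemma le_znorm {d : ℕ} (x : Fin d → ℤ) : ((sn x : ℕ) : ℝ) ≤ znorm x := by
  rcases Nat.eq_zero_or_pos d with hd | hd
  · subst hd
    simp [sn, znorm]
  · haveI : Nonempty (Fin d) := Fin.pos_iff_nonempty.1 hd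
    have hne : (Finset.univ : Finset (Fin d)).Nonempty := Finset.univ_nonempty
    obtain ⟨i, -, hi⟩ := Finset.exists_mem_eq_sup Finset.univ hne
      (fun i => (x i).natAbs)
    rw [show (sn x : ℕ) = (x i).natAbs from hi]
    have h1 : ((x i).natAbs : ℝ) = |((x i : ℤ) : ℝ)| := by
      simp [Nat.cast_natAbs]
    rw [h1, ← Real.sqrt_sq_eq_abs]
    apply Real.sqrt_le_sqrt
    exact Finset.single_le_sum (f := fun j => ((x j : ℤ) : ℝ)^2)
      (fun j _ => sq_nonneg _) (Finset.mem_univ i)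

end TriangleAux

open TriangleAux in
theorem triangle_condition_with_log (d : ℕ) (hd : 6 ≤ d) (C : ℝ) (hC : 0 < C)
    (G : (Fin d → ℤ) → ℝ)
    (hG : ∀ x, 0 ≤ G x ∧
      G x ≤ (if x = 0 then 1 else 0) +
        C * (max (znorm x) 1) ^ ((2 : ℝ) - d) / Real.log (max (znorm x) (Real.exp 1))) :
    Summable (fun p : (Fin d → ℤ) × (Fin d → ℤ) => G p.1 * G (p.2 - p.1) * G (-p.2)) := by
  have hd0 : 0 < d := by omega
  -- the single-site majorant
  set g : ℕ → ℝ := fun n => if n = 0 then (1+C)^(3/2:ℝ)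
    else C^(3/2:ℝ) * (((n:ℝ)) ^ (-(d:ℝ)) * (max (Real.log n) 1) ^ (-(3/2:ℝ))) with hgdef
  have hg0 : ∀ n, 0 ≤ g n := by
    intro n
    rw [hgdef]
    dsimp only
    split <;> positivity
  -- F = G^{3/2}
  set F : (Fin d → ℤ) → ℝ := fun x => G x ^ (3/2:ℝ) with hFdef
  have hF0 : ∀ x, 0 ≤ F x := fun x => Real.rpow_nonneg (hG x).1 _
  -- pointwise bound F x ≤ g (sn x)
  have hFg : ∀ x, F x ≤ g (sn x) := by
    intro x
    rcases eq_or_ne x 0 with hx | hx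
    · subst hx
      have hz : znorm (0 : Fin d → ℤ) = 0 := by simp [znorm]
      have hb : G 0 ≤ 1 + C := by
        have := (hG 0).2
        rw [if_pos rfl, hz] at this
        rw [max_eq_right (show (0:ℝ) ≤ Real.exp 1 from (Real.exp_pos 1).le), Real.log_exp,
          max_eq_right zero_le_one, Real.one_rpow] at this
        simpa using this
      rw [sn_eq_zero.2 rfl]
      simp only [hgdef, if_pos rfl]
      exact Real.rpow_le_rpow (hG 0).1 hb (by norm_num)
    · have hn1 : 1 ≤ sn x := Nat.one_le_iff_ne_zero.2 (fun h => hx (sn_eq_zero.1 h))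
      set n : ℕ := sn x with hn
      have hnR : (1:ℝ) ≤ (n:ℝ) := by exact_mod_cast hn1
      have hnz : ((n:ℕ):ℝ) ≤ znorm x := le_znorm x
      have hn0 : (0:ℝ) < (n:ℝ) := lt_of_lt_of_le one_pos hnR
      -- denominators
      have hden1 : max (Real.log n) 1 ≤ Real.log (max (znorm x) (Real.exp 1)) := by
        apply max_le
        · apply Real.log_le_log hn0
          exact le_trans hnz (le_max_left _ _)
        · calc (1:ℝ) = Real.log (Real.exp 1) := (Real.log_exp 1).symm
          _ ≤ _ := Real.log_le_log (Real.exp_pos 1) (le_max_right _ _)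
      have hden0 : (0:ℝ) < max (Real.log n) 1 := lt_of_lt_of_le one_pos (le_max_right _ _)
      -- numerator
      have hnum : (max (znorm x) 1) ^ ((2:ℝ) - d) ≤ (n:ℝ) ^ ((2:ℝ) - d) := by
        apply Real.rpow_le_rpow_of_nonpos hn0 (le_trans hnz (le_max_left _ _))
        have : (6:ℝ) ≤ (d:ℝ) := by exact_mod_cast hd
        linarith
      have hb : G x ≤ C * (n:ℝ) ^ ((2:ℝ) - d) / max (Real.log n) 1 := by
        refine le_trans (hG x).2 ?_
        rw [if_neg hx, zero_add]
        apply div_le_div₀ (by positivity)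
          (mul_le_mul_of_nonneg_left hnum hC.le) hden0 hden1
      have hb' : F x ≤ (C * (n:ℝ) ^ ((2:ℝ) - d) / max (Real.log n) 1) ^ (3/2:ℝ) :=
        Real.rpow_le_rpow (hG x).1 hb (by norm_num)
      refine le_trans hb' ?_
      rw [hgdef]
      simp only [if_neg (by omega : ¬ n = 0)]
      rw [div_eq_mul_inv, ← Real.rpow_neg_one (max (Real.log n) 1)]
      rw [Real.mul_rpow (by positivity) (by positivity),
        Real.mul_rpow hC.le (by positivity),
        ← Real.rpow_mul hn0.le, ← Real.rpow_mul hden0.le]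
      have hexp : ((2:ℝ) - d) * (3/2) ≤ -(d:ℝ) := by
        have : (6:ℝ) ≤ (d:ℝ) := by exact_mod_cast hd
        linarith
      have h1 : ((n:ℝ)) ^ (((2:ℝ) - d) * (3/2)) ≤ ((n:ℝ)) ^ (-(d:ℝ)) :=
        Real.rpow_le_rpow_of_exponent_le hnR hexp
      have h2 : (max (Real.log n) 1) ^ ((-1:ℝ) * (3/2)) = (max (Real.log n) 1) ^ (-(3/2:ℝ)) := by
        norm_num
      rw [h2, mul_assoc]
      apply mul_le_mul_of_nonneg_left _ (by positivity)
      exact mul_le_mul_of_nonneg_right h1 (by positivity)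
  -- summability of F
  have hsumg : Summable fun nn : ℕ => (nn:ℝ)^(d-1) * g nn := by
    refine Summable.of_nonneg_of_le
      (f := fun nn : ℕ => C^(3/2:ℝ) * (((nn:ℝ))⁻¹ * (max (Real.log nn) 1) ^ (-(3/2 : ℝ))))
      (fun nn => mul_nonneg (by positivity) (hg0 nn)) ?_ (logser.mul_left _)
    · intro nn
      rcases eq_or_ne nn 0 with h0 | h0
      · subst h0
        rw [hgdef]
        simp [zero_pow (by omega : d - 1 ≠ 0)]
      · have h1 : (1:ℝ) ≤ (nn:ℝ) := by exact_mod_cast Nat.one_le_iff_ne_zero.2 h0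
        have h1' : (0:ℝ) < (nn:ℝ) := lt_of_lt_of_le one_pos h1
        rw [hgdef]
        simp only [if_neg h0]
        apply le_of_eq
        have hkey : ((nn:ℝ))^(d-1) * ((nn:ℝ)) ^ (-(d:ℝ)) = ((nn:ℝ))⁻¹ := by
          rw [show ((nn:ℝ))^(d-1) = ((nn:ℝ)) ^ (((d-1 : ℕ)):ℝ) from (Real.rpow_natCast _ _).symm,
            ← Real.rpow_add h1']
          have he : ((d-1:ℕ):ℝ) + (-(d:ℝ)) = -1 := by
            have : ((d-1:ℕ):ℝ) = (d:ℝ) - 1 := by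
              push_cast [Nat.cast_sub (by omega : 1 ≤ d)]
              ring
            rw [this]; ring
          rw [he, Real.rpow_neg_one]
        calc ((nn:ℝ))^(d-1) * (C^(3/2:ℝ) * (((nn:ℝ)) ^ (-(d:ℝ)) * (max (Real.log nn) 1) ^ (-(3/2:ℝ))))
            = C^(3/2:ℝ) * ((((nn:ℝ))^(d-1) * ((nn:ℝ)) ^ (-(d:ℝ))) * (max (Real.log nn) 1) ^ (-(3/2:ℝ))) := by
              ring
        _ = C^(3/2:ℝ) * (((nn:ℝ))⁻¹ * (max (Real.log nn) 1) ^ (-(3/2:ℝ))) := by rw [hkey]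
  have hF : Summable F :=
    Summable.of_nonneg_of_le hF0 hFg (summableA hd0 g hg0 hsumg)
  -- decoupled pair sums
  have base : Summable (fun q : (Fin d → ℤ) × (Fin d → ℤ) => F q.1 * F q.2) :=
    hF.mul_of_nonneg hF hF0 hF0
  have hT1 : Summable (fun p : (Fin d → ℤ) × (Fin d → ℤ) => F p.1 * F (p.2 - p.1)) := by
    have hinj : Function.Injective
        (fun p : (Fin d → ℤ) × (Fin d → ℤ) => ((p.1, p.2 - p.1) : _ × _)) := by
      intro p q h
      simp only [Prod.mk.injEq] at h
      obtain ⟨h1, h2⟩ := h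
      have : p.2 = q.2 := by
        have := h2
        rw [h1] at this
        exact sub_left_injective this
      exact Prod.ext h1 this
    exact base.comp_injective
      (i := fun p : (Fin d → ℤ) × (Fin d → ℤ) => ((p.1, p.2 - p.1) : _ × _)) hinj
  have hT2 : Summable (fun p : (Fin d → ℤ) × (Fin d → ℤ) => F (p.2 - p.1) * F (-p.2)) := by
    have hinj : Function.Injective
        (fun p : (Fin d → ℤ) × (Fin d → ℤ) => ((p.2 - p.1, -p.2) : _ × _)) := by
      intro p q h
      simp only [Prod.mk.injEq] at h
      obtain ⟨h1, h2⟩ := h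
      have h2' : p.2 = q.2 := neg_injective h2
      have h1' : p.1 = q.1 := by
        have := h1
        rw [h2'] at this
        have := sub_right_injective this
        exact this
      exact Prod.ext h1' h2'
    exact base.comp_injective
      (i := fun p : (Fin d → ℤ) × (Fin d → ℤ) => ((p.2 - p.1, -p.2) : _ × _)) hinj
  have hT3 : Summable (fun p : (Fin d → ℤ) × (Fin d → ℤ) => F (-p.2) * F p.1) := by
    have hinj : Function.Injective
        (fun p : (Fin d → ℤ) × (Fin d → ℤ) => ((-p.2, p.1) : _ × _)) := by
      intro p q h
      simp only [Prod.mk.injEq] at h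
      exact Prod.ext h.2 (neg_injective h.1)
    exact base.comp_injective
      (i := fun p : (Fin d → ℤ) × (Fin d → ℤ) => ((-p.2, p.1) : _ × _)) hinj
  -- final comparison
  apply Summable.of_nonneg_of_le
    (f := fun p : (Fin d → ℤ) × (Fin d → ℤ) =>
      1/3 * (F p.1 * F (p.2 - p.1)) + (1/3 * (F (p.2 - p.1) * F (-p.2)) +
        1/3 * (F (-p.2) * F p.1)))
  · intro p
    exact mul_nonneg (mul_nonneg (hG _).1 (hG _).1) (hG _).1
  · intro p
    have h := amgm3 (hG p.1).1 (hG (p.2 - p.1)).1 (hG (-p.2)).1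
    have e1 : (G p.1 * G (p.2 - p.1))^(3/2:ℝ) = F p.1 * F (p.2 - p.1) :=
      Real.mul_rpow (hG _).1 (hG _).1
    have e2 : (G (p.2 - p.1) * G (-p.2))^(3/2:ℝ) = F (p.2 - p.1) * F (-p.2) :=
      Real.mul_rpow (hG _).1 (hG _).1
    have e3 : (G (-p.2) * G p.1)^(3/2:ℝ) = F (-p.2) * F p.1 :=
      Real.mul_rpow (hG _).1 (hG _).1
    rw [e1, e2, e3] at h
    exact h
  · exact ((hT1.mul_left _).add ((hT2.mul_left _).add (hT3.mul_left _)))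
end
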